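/- arXiv:1410.8333 — 4 statements merged into one kernel-verified Lean document; each statement's English description precedes it below -/
import Mathlib

section
/- Let X and Y be topological vector spaces, γ ∈ C(0), U a neighborhood of 0 in X, and f ∈ 𝓛_{γ,U}(X, Y). Then f is continuous on X if and only if f is continuous at 0 ∈ X. -/
open Topology Filter Set

noncomputable section

abbrev Rn (n : ℕ) : Type := EuclideanSpace ℝ (Fin n)

/-- The model of `C^∞(Ω)`: functions smooth on `Ω` and vanishing outside `Ω`. -/
def cinfSubmodule (n : ℕ) (Ω : Set (Rn n)) : Submodule ℂ (Rn n → ℂ) where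
  carrier := {g | ContDiffOn ℝ (⊤ : ℕ∞) g Ω ∧ ∀ x ∉ Ω, g x = 0}
  add_mem' := by
    rintro g h ⟨hg1, hg2⟩ ⟨hh1, hh2⟩
    refine ⟨hg1.add hh1, fun x hx => ?_⟩
    simp [Pi.add_apply, hg2 x hx, hh2 x hx]
  zero_mem' := ⟨contDiffOn_const, fun _ _ => rfl⟩
  smul_mem' := by
    rintro c g ⟨hg1, hg2⟩
    refine ⟨hg1.const_smul c, fun x hx => ?_⟩
    simp [hg2 x hx]

/-- The model of the test-function space `C₀^∞(Ω)`. -/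
def testSubmodule (n : ℕ) (Ω : Set (Rn n)) : Submodule ℂ (Rn n → ℂ) where
  carrier := {g | ContDiffOn ℝ (⊤ : ℕ∞) g Ω ∧ (∀ x ∉ Ω, g x = 0) ∧
    IsCompact (tsupport g) ∧ tsupport g ⊆ Ω}
  add_mem' := by
    rintro g h ⟨hg1, hg2, hg3, hg4⟩ ⟨hh1, hh2, hh3, hh4⟩
    have hsub : tsupport (g + h) ⊆ tsupport g ∪ tsupport h := tsupport_add g h
    exact ⟨hg1.add hh1, fun x hx => by simp [hg2 x hx, hh2 x hx],
      (hg3.union hh3).of_isClosed_subset (isClosed_tsupport _) hsub,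
      hsub.trans (union_subset hg4 hh4)⟩
  zero_mem' := by
    have h0 : tsupport (0 : Rn n → ℂ) = ∅ := by simp [tsupport]
    exact ⟨contDiffOn_const, fun _ _ => rfl, by rw [h0]; exact isCompact_empty,
      by rw [h0]; exact empty_subset Ω⟩
  smul_mem' := by
    rintro c g ⟨hg1, hg2, hg3, hg4⟩
    have hsub : tsupport (c • g) ⊆ tsupport g := by
      refine closure_mono fun x hx => ?_
      simp only [Function.mem_support, Pi.smul_apply, smul_eq_mul] at hx ⊢
      exact fun h => hx (by simp [h])
    exact ⟨hg1.const_smul c, fun x hx => by simp [hg2 x hx],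
      hg3.of_isClosed_subset (isClosed_tsupport _) hsub, hsub.trans hg4⟩

abbrev CInfOn (n : ℕ) (Ω : Set (Rn n)) : Type := ↥(cinfSubmodule n Ω)
abbrev TestFn (n : ℕ) (Ω : Set (Rn n)) : Type := ↥(testSubmodule n Ω)

/-- The natural inclusion of `C₀^∞(Ω)` into `C^∞(Ω)`. -/
def toCInf {n : ℕ} {Ω : Set (Rn n)} (ξ : TestFn n Ω) : CInfOn n Ω :=
  ⟨ξ.val, ξ.2.1, ξ.2.2.1⟩

/-- The family of compact subsets of `Ω`. -/
def cptsIn (n : ℕ) (Ω : Set (Rn n)) : Set (Set (Rn n)) := {K | IsCompact K ∧ K ⊆ Ω}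

/-- The family of all iterated derivatives (within `Ω`) of a function, seen as elements of
spaces of uniform convergence on compact subsets of `Ω`. -/
def derivsMap (n : ℕ) (Ω : Set (Rn n)) (g : Rn n → ℂ) :
    (k : ℕ) → UniformOnFun (Rn n) (ContinuousMultilinearMap ℝ (fun _ : Fin k => Rn n) ℂ)
      (cptsIn n Ω) :=
  fun k => (UniformOnFun.ofFun (cptsIn n Ω)) (iteratedFDerivWithin ℝ k g Ω)

/-- The Fréchet topology of `C^∞(Ω)`: uniform convergence of all derivatives on all compact
subsets of `Ω`. -/
instance (priority := 2000) instCInfTop (n : ℕ) (Ω : Set (Rn n)) :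
    TopologicalSpace (CInfOn n Ω) :=
  TopologicalSpace.induced (fun ξ => derivsMap n Ω ξ.val) inferInstance

/-- A candidate topology for the inductive limit topology on `C₀^∞(Ω)`: a locally convex
vector topology making all the inclusions `C^∞(K) → C₀^∞(Ω)` continuous, where `C^∞(K)`
(the test functions supported in the compact set `K ⊆ Ω`) carries the Fréchet topology. -/
def IsLFCandidate (n : ℕ) (Ω : Set (Rn n)) (t : TopologicalSpace (TestFn n Ω)) : Prop :=
  @IsTopologicalAddGroup (TestFn n Ω) t _ ∧
  @ContinuousSMul ℂ (TestFn n Ω) _ _ t ∧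
  @LocallyConvexSpace ℝ (TestFn n Ω) _ _ _ _ t ∧
  ∀ K : Set (Rn n), IsCompact K → K ⊆ Ω →
    @Continuous {ξ : TestFn n Ω // tsupport ξ.val ⊆ K} (TestFn n Ω)
      (TopologicalSpace.induced (fun ζ => derivsMap n Ω ζ.val.val) inferInstance) t
      Subtype.val

/-- The usual inductive limit (LF) topology of `C₀^∞(Ω)`: the finest locally convex vector
topology making all inclusions `C^∞(K) → C₀^∞(Ω)` continuous. -/
instance (priority := 2000) instTestTop (n : ℕ) (Ω : Set (Rn n)) :
    TopologicalSpace (TestFn n Ω) :=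
  sSup {t | IsLFCandidate n Ω t}

/-- The family `C(0)` of the paper. -/
def CzeroFam (γ : ℂ → ℂ) : Prop :=
  Tendsto γ (𝓝 0) (𝓝 0) ∧ γ 0 = 0 ∧ ∀ t : ℂ, ‖t‖ ≤ 1 → ‖t‖ ≤ ‖γ t‖

/-- The family `𝓛_{γ,U}(X, Y)` of demi-linear maps. -/
def DemiL {X Y : Type*} [AddCommGroup X] [Module ℂ X] [AddCommGroup Y] [Module ℂ Y]
    (γ : ℂ → ℂ) (U : Set X) (f : X → Y) : Prop :=
  f 0 = 0 ∧ ∀ x : X, ∀ u ∈ U, ∀ t : ℂ, ‖t‖ ≤ 1 →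
    ∃ r s : ℂ, ‖r - 1‖ ≤ ‖γ t‖ ∧ ‖s‖ ≤ ‖γ t‖ ∧ f (x + t • u) = r • f x + s • f u

/-- The family `𝓚_{γ,U}(X, ℂ)`. -/
def DemiK {X : Type*} [AddCommGroup X] [Module ℂ X]
    (γ : ℂ → ℂ) (U : Set X) (f : X → ℂ) : Prop :=
  f 0 = 0 ∧ ∀ x : X, ∀ u ∈ U, ∀ t : ℂ, ‖t‖ ≤ 1 →
    ∃ s : ℂ, ‖s‖ ≤ ‖γ t‖ ∧ f (x + t • u) = f x + s * f u

/-- `supp ξ = closure {x ∈ Ω : ξ x ≠ 0} ∩ Ω`. -/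
def suppFun {n : ℕ} (Ω : Set (Rn n)) (g : Rn n → ℂ) : Set (Rn n) :=
  closure {x | x ∈ Ω ∧ g x ≠ 0} ∩ Ω

/-- The support of a functional `f` defined on a set `S` of functions on `Ω`. -/
def fsupp {n : ℕ} {S : Type*} (Ω : Set (Rn n)) (coeF : S → (Rn n → ℂ)) (f : S → ℂ) :
    Set (Rn n) :=
  {x | x ∈ Ω ∧ ∀ G : Set (Rn n), IsOpen G → G ⊆ Ω → x ∈ G →
    ∃ ξ : S, suppFun Ω (coeF ξ) ⊆ G ∧ f ξ ≠ 0}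

/-- `Σ_{|α| ≤ k} sup_K |∂^α g|`, expressed via iterated Fréchet derivatives within `Ω`. -/
def pnorm {n : ℕ} (Ω K : Set (Rn n)) (k : ℕ) (g : Rn n → ℂ) : ℝ :=
  ∑ i ∈ Finset.range (k + 1), ⨆ x ∈ K, ‖iteratedFDerivWithin ℝ i g Ω x‖

/-- Condition (1.1) of the paper. -/
def Cond11 {n : ℕ} (Ω : Set (Rn n)) (f : TestFn n Ω → ℂ) : Prop :=
  ∀ K : Set (Rn n), IsCompact K → K ⊆ Ω → ∃ C > 0, ∃ k : ℕ,
    ∀ ξ : TestFn n Ω, suppFun Ω ξ.val ⊆ K → ‖f ξ‖ ≤ C * pnorm Ω K k ξ.val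

/-- Pointwise multiplication of a test function and a smooth function, a test function. -/
def mulTest {n : ℕ} {Ω : Set (Rn n)} (𝒳 : TestFn n Ω) (ξ : CInfOn n Ω) : TestFn n Ω := by
  refine ⟨fun x => 𝒳.val x * ξ.val x, ?_⟩
  obtain ⟨hs, hz, hc, hsubΩ⟩ := 𝒳.2
  obtain ⟨hs', hz'⟩ := ξ.2
  have hsupp : tsupport (fun x => 𝒳.val x * ξ.val x) ⊆ tsupport (𝒳.val : Rn n → ℂ) :=
    tsupport_mul_subset_left
  exact ⟨hs.mul hs', fun x hx => by show 𝒳.val x * ξ.val x = 0; rw [hz x hx, zero_mul],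
    hc.of_isClosed_subset (isClosed_tsupport _) hsupp, hsupp.trans hsubΩ⟩

open scoped Classical in
/-- The canonical extension of a functional on `C₀^∞(Ω)` to smooth functions, defined via
`f`-decompositions `ξ = ξ₀ + ξ₁` with `ξ₀ ∈ C₀^∞(Ω)` and `supp ξ₁ ∩ supp f = ∅`. -/
def canonExt {n : ℕ} {Ω : Set (Rn n)} (f : TestFn n Ω → ℂ) (ξ : CInfOn n Ω) : ℂ :=
  if h : ∃ ξ₀ : TestFn n Ω, suppFun Ω (ξ.val - ξ₀.val) ∩ fsupp Ω Subtype.val f = ∅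
  then f h.choose else 0

end

/-- The family `C(0)` over a general scalar field. -/
def CzeroGen {𝕜 : Type*} [RCLike 𝕜] (γ : 𝕜 → 𝕜) : Prop :=
  Tendsto γ (𝓝 0) (𝓝 0) ∧ γ 0 = 0 ∧ ∀ t : 𝕜, ‖t‖ ≤ 1 → ‖t‖ ≤ ‖γ t‖

/-- The family `𝓛_{γ,U}(X, Y)` over a general scalar field. -/
def DemiLGen {𝕜 X Y : Type*} [RCLike 𝕜] [AddCommGroup X] [Module 𝕜 X]
    [AddCommGroup Y] [Module 𝕜 Y] (γ : 𝕜 → 𝕜) (U : Set X) (f : X → Y) : Prop :=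
  f 0 = 0 ∧ ∀ x : X, ∀ u ∈ U, ∀ t : 𝕜, ‖t‖ ≤ 1 →
    ∃ r s : 𝕜, ‖r - 1‖ ≤ ‖γ t‖ ∧ ‖s‖ ≤ ‖γ t‖ ∧ f (x + t • u) = r • f x + s • f u

open Pointwise in
/-- a demi-linear map between topological vector spaces is continuous iff it
is continuous at `0`. -/
theorem stmt12 {𝕜 X Y : Type*} [RCLike 𝕜]
    [AddCommGroup X] [Module 𝕜 X] [TopologicalSpace X] [IsTopologicalAddGroup X]
    [ContinuousSMul 𝕜 X]
    [AddCommGroup Y] [Module 𝕜 Y] [TopologicalSpace Y] [IsTopologicalAddGroup Y]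
    [ContinuousSMul 𝕜 Y]
    (γ : 𝕜 → 𝕜) (hγ : CzeroGen γ) (U : Set X) (hU : U ∈ 𝓝 (0 : X))
    (f : X → Y) (hf : DemiLGen γ U f) :
    Continuous f ↔ ContinuousAt f 0 := by
  constructor
  · exact fun h => h.continuousAt
  intro h0
  have hf0 : Tendsto f (𝓝 0) (𝓝 (0 : Y)) := by
    have := h0; rwa [ContinuousAt, hf.1] at this
  rw [continuous_iff_continuousAt]
  intro x₀
  rw [ContinuousAt, ← map_add_left_nhds_zero x₀, tendsto_map'_iff]
  have key : Tendsto (fun h : X => f (x₀ + h) - f x₀) (𝓝 0) (𝓝 0) := by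
    intro W hW
    rw [mem_map]
    obtain ⟨V, hV, hVW⟩ := exists_nhds_zero_half hW
    -- term A : c • f x₀ small for small c
    have hA : Tendsto (fun c : 𝕜 => c • f x₀) (𝓝 0) (𝓝 0) := by
      simpa using (tendsto_id.smul_const (f x₀) : Tendsto (fun c : 𝕜 => c • f x₀) (𝓝 0) (𝓝 ((0:𝕜) • f x₀)))
    obtain ⟨ε₁, hε₁, hball₁⟩ := Metric.mem_nhds_iff.1 (hA hV)
    -- term B : smul continuous at (0,0)
    have hsm : Tendsto (fun p : 𝕜 × Y => p.1 • p.2) (𝓝 ((0:𝕜), (0:Y))) (𝓝 0) := by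
      simpa using (continuous_smul.tendsto ((0:𝕜), (0:Y)))
    have hpre : (fun p : 𝕜 × Y => p.1 • p.2) ⁻¹' V ∈ 𝓝 ((0:𝕜), (0:Y)) := hsm hV
    rw [mem_nhds_prod_iff] at hpre
    obtain ⟨s₀, hs₀, V₂, hV₂, hsub⟩ := hpre
    obtain ⟨ε₂, hε₂, hball₂⟩ := Metric.mem_nhds_iff.1 hs₀
    -- pick t
    set ε := min ε₁ ε₂ with hε
    have hεpos : 0 < ε := lt_min hε₁ hε₂
    have hγpre : γ ⁻¹' (Metric.ball 0 ε) ∈ 𝓝 (0:𝕜) := hγ.1 (Metric.ball_mem_nhds _ hεpos)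
    obtain ⟨ρ, hρ, hballρ⟩ := Metric.mem_nhds_iff.1 hγpre
    obtain ⟨t, ht0, htρ⟩ := NormedField.exists_norm_lt 𝕜 (lt_min hρ one_pos)
    have htne : t ≠ 0 := by simpa [norm_pos_iff] using ht0
    have ht1 : ‖t‖ ≤ 1 := le_of_lt (lt_of_lt_of_le htρ (min_le_right _ _))
    have hγt : ‖γ t‖ < ε := by
      have : t ∈ Metric.ball (0:𝕜) ρ := by
        simpa [Metric.mem_ball, dist_eq_norm] using lt_of_lt_of_le htρ (min_le_left _ _)
      simpa [Metric.mem_ball, dist_eq_norm] using hballρ this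
    -- neighborhood
    have hS : U ∩ f ⁻¹' V₂ ∈ 𝓝 (0:X) := inter_mem hU (hf0 hV₂)
    have hN : t • (U ∩ f ⁻¹' V₂) ∈ 𝓝 (0:X) := (set_smul_mem_nhds_zero_iff htne).2 hS
    refine mem_of_superset hN ?_
    rintro h ⟨u, hu, rfl⟩
    obtain ⟨r, s, hr, hs, heq⟩ := hf.2 x₀ u hu.1 t ht1
    have hcalc : f (x₀ + t • u) - f x₀ = (r - 1) • f x₀ + s • f u := by
      rw [heq, sub_smul, one_smul]; abel
    simp only [Set.mem_preimage, hcalc]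
    apply hVW
    · refine hball₁ ?_
      simpa [Metric.mem_ball, dist_eq_norm] using lt_of_le_of_lt hr (lt_of_lt_of_le hγt (min_le_left _ _))
    · refine hsub (Set.mk_mem_prod (hball₂ ?_) hu.2)
      simpa [Metric.mem_ball, dist_eq_norm] using lt_of_le_of_lt hs (lt_of_lt_of_le hγt (min_le_right _ _))
  have h2 := key.add (tendsto_const_nhds : Tendsto (fun _ : X => f x₀) (𝓝 0) (𝓝 (f x₀)))
  simp only [sub_add_cancel, zero_add] at h2
  exact h2
end

section
/- Let Ω be a nonempty open subset of ℝⁿ, M ≥ 1, γ(t) = M·t for t ∈ ℂ, and V a neighborhood of 0 in C^∞(Ω). Then for every f ∈ C^∞(Ω)^{[γ,V]} there exist a compact set L ⊆ Ω, a constant C > 0 and k ∈ ℕ∪{0} such that |f(ξ)| ≤ C·Σ_{|α|≤k} sup_L |∂^α ξ| for all ξ ∈ C^∞(Ω). Consequently supp f is compact, f satisfies condition (1.1) on every compact K ⊆ Ω, and f is of order ≤ k. -/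
open Topology Filter Set

section AuxLemmas

open UniformConvergence

variable {n : ℕ} {Ω : Set (Rn n)}

lemma biSup_nonneg' {α : Type*} {K : Set α} {g : α → ℝ} (h : ∀ x, 0 ≤ g x) :
    0 ≤ ⨆ x ∈ K, g x :=
  Real.iSup_nonneg fun x => Real.iSup_nonneg fun _ => h x

lemma biSup_le'' {α : Type*} {K : Set α} {g : α → ℝ} {B : ℝ} (hB : 0 ≤ B)
    (h : ∀ x ∈ K, g x ≤ B) : (⨆ x ∈ K, g x) ≤ B :=
  Real.iSup_le (fun x => Real.iSup_le (fun hx => h x hx) hB) hB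

lemma le_biSup'' {α : Type*} {K : Set α} {g : α → ℝ}
    (hbdd : BddAbove (g '' K)) {x : α} (hx : x ∈ K) : g x ≤ ⨆ y ∈ K, g y := by
  obtain ⟨B, hB⟩ := hbdd
  have hB' : ∀ y ∈ K, g y ≤ B := fun y hy => hB (Set.mem_image_of_mem g hy)
  refine le_ciSup_of_le ?_ x ?_
  · refine ⟨max B 0, ?_⟩
    rintro b ⟨y, rfl⟩
    exact Real.iSup_le (fun hy => le_max_of_le_left (hB' y hy)) (le_max_right _ _)
  · exact le_ciSup (f := fun _ : x ∈ K => g x)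
      ⟨g x, by rintro b ⟨_, rfl⟩; exact le_rfl⟩ hx

lemma pnorm_nonneg (K : Set (Rn n)) (k : ℕ) (g : Rn n → ℂ) : 0 ≤ pnorm Ω K k g :=
  Finset.sum_nonneg fun _ _ => biSup_nonneg' fun _ => norm_nonneg _

lemma bdd_iter (hΩ : IsOpen Ω) {g : Rn n → ℂ} (hg : ContDiffOn ℝ (⊤ : ℕ∞) g Ω)
    {K : Set (Rn n)} (hK : IsCompact K) (hKΩ : K ⊆ Ω) (i : ℕ) :
    BddAbove ((fun x => ‖iteratedFDerivWithin ℝ i g Ω x‖) '' K) := by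
  have hcont : ContinuousOn (fun x => ‖iteratedFDerivWithin ℝ i g Ω x‖) Ω :=
    (hg.continuousOn_iteratedFDerivWithin (by exact_mod_cast le_top) hΩ.uniqueDiffOn).norm
  exact (hK.image_of_continuousOn (hcont.mono hKΩ)).bddAbove

lemma norm_iter_le_pnorm (hΩ : IsOpen Ω) {g : Rn n → ℂ} (hg : ContDiffOn ℝ (⊤ : ℕ∞) g Ω)
    {K : Set (Rn n)} (hK : IsCompact K) (hKΩ : K ⊆ Ω) {i k : ℕ} (hik : i ≤ k) {x : Rn n}
    (hx : x ∈ K) : ‖iteratedFDerivWithin ℝ i g Ω x‖ ≤ pnorm Ω K k g := by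
  refine le_trans (le_biSup'' (bdd_iter hΩ hg hK hKΩ i) hx) ?_
  exact Finset.single_le_sum
    (f := fun j => ⨆ x ∈ K, ‖iteratedFDerivWithin ℝ j g Ω x‖)
    (fun j _ => biSup_nonneg' fun _ => norm_nonneg _)
    (Finset.mem_range.mpr (Nat.lt_succ_of_le hik))

lemma pnorm_smul_le (hΩ : IsOpen Ω) {g : Rn n → ℂ} (hg : ContDiffOn ℝ (⊤ : ℕ∞) g Ω)
    {K : Set (Rn n)} (hK : IsCompact K) (hKΩ : K ⊆ Ω) (k : ℕ) (c : ℂ) :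
    pnorm Ω K k (c • g) ≤ ‖c‖ * pnorm Ω K k g := by
  rw [pnorm, pnorm, Finset.mul_sum]
  refine Finset.sum_le_sum fun i _ => ?_
  refine biSup_le'' (mul_nonneg (norm_nonneg c)
    (biSup_nonneg' fun _ => norm_nonneg _)) fun x hx => ?_
  have hDx : iteratedFDerivWithin ℝ i (c • g) Ω x = c • iteratedFDerivWithin ℝ i g Ω x :=
    iteratedFDerivWithin_const_smul_apply ((hg x (hKΩ hx)).of_le (by exact_mod_cast le_top))
      hΩ.uniqueDiffOn (hKΩ hx)
  rw [hDx, norm_smul]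
  exact mul_le_mul_of_nonneg_left (le_biSup'' (bdd_iter hΩ hg hK hKΩ i) hx) (norm_nonneg c)

lemma iter_vanish (hΩ : IsOpen Ω) (ξ : CInfOn n Ω) {x : Rn n} (hx : x ∈ Ω)
    (hns : x ∉ suppFun Ω ξ.val) (i : ℕ) : iteratedFDerivWithin ℝ i ξ.val Ω x = 0 := by
  have hxc : x ∉ closure {y | y ∈ Ω ∧ ξ.val y ≠ 0} := fun h => hns ⟨h, hx⟩
  have hU : (closure {y | y ∈ Ω ∧ ξ.val y ≠ 0})ᶜ ∈ 𝓝 x :=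
    isClosed_closure.isOpen_compl.mem_nhds hxc
  have hzero : ∀ y ∈ (closure {y | y ∈ Ω ∧ ξ.val y ≠ 0})ᶜ, ξ.val y = 0 := by
    intro y hy
    by_cases hyΩ : y ∈ Ω
    · by_contra hne
      exact hy (subset_closure ⟨hyΩ, hne⟩)
    · exact ξ.2.2 y hyΩ
  have heq : ξ.val =ᶠ[𝓝[Ω] x] (fun _ => (0 : ℂ)) :=
    (eventually_of_mem hU hzero).filter_mono nhdsWithin_le_nhds
  rw [heq.iteratedFDerivWithin_eq (hzero x hxc) i]
  simp only [iteratedFDerivWithin_zero_fun, Pi.zero_apply]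

lemma cptsIn_nonempty : (cptsIn n Ω).Nonempty :=
  ⟨∅, isCompact_empty, empty_subset Ω⟩

lemma cptsIn_directed : DirectedOn (· ⊆ ·) (cptsIn n Ω) := by
  rintro K₁ ⟨h₁, h₁Ω⟩ K₂ ⟨h₂, h₂Ω⟩
  exact ⟨K₁ ∪ K₂, ⟨h₁.union h₂, union_subset h₁Ω h₂Ω⟩, subset_union_left, subset_union_right⟩

/-- Key lemma: every neighborhood of `0` in `C^∞(Ω)` contains a `pnorm`-ball. -/
lemma nhds_key (hΩ : IsOpen Ω) {W : Set (CInfOn n Ω)} (hW : W ∈ 𝓝 (0 : CInfOn n Ω)) :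
    ∃ L : Set (Rn n), IsCompact L ∧ L ⊆ Ω ∧ ∃ k : ℕ, ∃ δ : ℝ, 0 < δ ∧
      ∀ ξ : CInfOn n Ω, pnorm Ω L k ξ.val < δ → ξ ∈ W := by
  have h0 : W ∈ Filter.comap (fun ξ : CInfOn n Ω => derivsMap n Ω ξ.val)
      (𝓝 (derivsMap n Ω (0 : CInfOn n Ω).val)) := by
    rw [← nhds_induced]; exact hW
  obtain ⟨T, hT, hTsub⟩ := Filter.mem_comap.mp h0
  rw [nhds_pi] at hT
  obtain ⟨I, hIfin, t, ht, hIsub⟩ := Filter.mem_pi.mp hT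
  -- pick a basic set inside each `t i`
  have hsel : ∀ i : ℕ, ∃ Sε : Set (Rn n) × ℝ, (Sε.1 ∈ cptsIn n Ω ∧ 0 < Sε.2) ∧
      {y | (derivsMap n Ω (0 : CInfOn n Ω).val i, y) ∈
        UniformOnFun.gen (cptsIn n Ω) Sε.1 {p | dist p.1 p.2 < Sε.2}} ⊆ t i := by
    intro i
    have hb := UniformOnFun.hasBasis_uniformity_of_basis (Rn n)
      (ContinuousMultilinearMap ℝ (fun _ : Fin i => Rn n) ℂ) (cptsIn n Ω)
      cptsIn_nonempty cptsIn_directed Metric.uniformity_basis_dist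
    exact (nhds_basis_uniformity' hb).mem_iff.mp (ht i)
  choose Sε hSε hgen using hsel
  set F : Finset ℕ := insert 0 hIfin.toFinset with hF
  refine ⟨⋃ i ∈ F, (Sε i).1, ?_, ?_, F.sup id, F.inf' ⟨0, Finset.mem_insert_self _ _⟩
    (fun i => (Sε i).2), ?_, ?_⟩
  · exact F.finite_toSet.isCompact_biUnion fun i _ => (hSε i).1.1
  · exact Set.iUnion₂_subset fun i _ => (hSε i).1.2
  · exact (Finset.lt_inf'_iff _).mpr fun i _ => (hSε i).2
  · intro ξ hξ
    apply hTsub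
    apply hIsub
    rw [Set.mem_pi]
    intro i hiI
    have hiF : i ∈ F := by
      rw [hF]
      exact Finset.mem_insert_of_mem (hIfin.mem_toFinset.mpr hiI)
    apply hgen i
    intro z hz
    have hzΩ : z ∈ Ω := (hSε i).1.2 hz
    have hzero : (UniformOnFun.toFun (cptsIn n Ω))
        (derivsMap n Ω (0 : CInfOn n Ω).val i) z = 0 := by
      show iteratedFDerivWithin ℝ i ((0 : CInfOn n Ω) : Rn n → ℂ) Ω z = 0
      have : ((0 : CInfOn n Ω) : Rn n → ℂ) = fun _ => (0 : ℂ) := rfl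
      rw [this]
      simp only [iteratedFDerivWithin_zero_fun, Pi.zero_apply]
    show dist _ _ < (Sε i).2
    rw [hzero, dist_zero_left]
    have hle : ‖iteratedFDerivWithin ℝ i ξ.val Ω z‖ ≤ pnorm Ω (⋃ j ∈ F, (Sε j).1) (F.sup id) ξ.val :=
      norm_iter_le_pnorm hΩ ξ.2.1 (F.finite_toSet.isCompact_biUnion fun j _ => (hSε j).1.1)
        (Set.iUnion₂_subset fun j _ => (hSε j).1.2) (Finset.le_sup (f := id) hiF)
        (Set.mem_biUnion hiF hz)
    calc ‖(UniformOnFun.toFun (cptsIn n Ω)) (derivsMap n Ω ξ.val i) z‖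
        ≤ pnorm Ω (⋃ j ∈ F, (Sε j).1) (F.sup id) ξ.val := hle
      _ < _ := hξ
      _ ≤ (Sε i).2 := Finset.inf'_le _ hiF

end AuxLemmas

/-- every `f ∈ C^∞(Ω)^{[γ,V]}` with `γ t = M·t`, `M ≥ 1`, is dominated by a
single seminorm `C·Σ_{|α| ≤ k} sup_L |∂^α ·|`; consequently `supp f` is compact, condition
(1.1) holds for `f`, and `f` is of order `≤ k`. -/
theorem stmt15 (n : ℕ) (Ω : Set (Rn n)) (hΩ : IsOpen Ω) (hne : Ω.Nonempty)
    (M : ℝ) (hM : 1 ≤ M)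
    (V : Set (CInfOn n Ω)) (hV : V ∈ 𝓝 (0 : CInfOn n Ω))
    (f : CInfOn n Ω → ℂ) (hf : DemiK (fun t : ℂ => (M : ℂ) * t) V f)
    (hc : Continuous f) :
    ∃ L : Set (Rn n), IsCompact L ∧ L ⊆ Ω ∧ ∃ C > 0, ∃ k : ℕ,
      (∀ ξ : CInfOn n Ω, ‖f ξ‖ ≤ C * pnorm Ω L k ξ.val) ∧
      IsCompact (fsupp Ω Subtype.val f) ∧
      (∀ K : Set (Rn n), IsCompact K → K ⊆ Ω → ∃ C' > 0,
        ∀ ξ : CInfOn n Ω, suppFun Ω ξ.val ⊆ K → ‖f ξ‖ ≤ C' * pnorm Ω K k ξ.val) := by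
  have hM0 : (0 : ℝ) < M := lt_of_lt_of_le one_pos hM
  -- a single pnorm-ball contained in `V` on which `‖f‖ ≤ 1`
  have hfc : f ⁻¹' Metric.ball 0 1 ∈ 𝓝 (0 : CInfOn n Ω) := by
    have hb : Metric.ball (0 : ℂ) 1 ∈ 𝓝 (f 0) := by
      rw [hf.1]; exact Metric.ball_mem_nhds _ one_pos
    exact hc.continuousAt.preimage_mem_nhds hb
  obtain ⟨L, hLc, hLΩ, k, δ, hδ, hball⟩ := nhds_key hΩ (Filter.inter_mem hV hfc)
  have hVmem : ∀ ξ : CInfOn n Ω, pnorm Ω L k ξ.val < δ → ξ ∈ V := fun ξ h => (hball ξ h).1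
  have hf1 : ∀ ξ : CInfOn n Ω, pnorm Ω L k ξ.val < δ → ‖f ξ‖ ≤ 1 := by
    intro ξ h
    have := (hball ξ h).2
    rw [Set.mem_preimage, mem_ball_zero_iff] at this
    exact this.le
  set C : ℝ := 4 * M / δ with hCdef
  have hC : 0 < C := by positivity
  -- the key norm estimate
  have key : ∀ ξ : CInfOn n Ω, ‖f ξ‖ ≤ C * pnorm Ω L k ξ.val := by
    intro ξ
    set p := pnorm Ω L k ξ.val with hp
    have hp0 : 0 ≤ p := pnorm_nonneg L k ξ.val
    -- scaling-up estimate
    have scale : ∀ r : ℝ, 1 ≤ r → r * p < δ → ‖f ξ‖ ≤ M / r := by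
      intro r hr hrp
      have hr0 : 0 < r := lt_of_lt_of_le one_pos hr
      set u : CInfOn n Ω := ((r : ℂ)) • ξ with hu
      have huval : (u : Rn n → ℂ) = (r : ℂ) • (ξ : Rn n → ℂ) := rfl
      have hup : pnorm Ω L k u.val < δ := by
        rw [huval]
        refine lt_of_le_of_lt (pnorm_smul_le hΩ ξ.2.1 hLc hLΩ k _) ?_
        rwa [Complex.norm_real, Real.norm_eq_abs, abs_of_pos hr0]
      obtain ⟨s, hs, heq⟩ := hf.2 0 u (hVmem u hup) ((r : ℂ)⁻¹)
        (by rw [norm_inv, Complex.norm_real, Real.norm_eq_abs, abs_of_pos hr0]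
            exact inv_le_one_of_one_le₀ hr)
      have hux : (0 : CInfOn n Ω) + ((r : ℂ)⁻¹) • u = ξ := by
        rw [zero_add, hu, smul_smul, inv_mul_cancel₀ (by exact_mod_cast hr0.ne'), one_smul]
      rw [hux, hf.1, zero_add] at heq
      rw [heq, norm_mul]
      have hsle : ‖s‖ ≤ M / r := by
        refine hs.trans (le_of_eq ?_)
        rw [norm_mul, norm_inv, Complex.norm_real, Complex.norm_real,
          Real.norm_eq_abs, Real.norm_eq_abs, abs_of_pos hM0, abs_of_pos hr0, div_eq_mul_inv]
      calc ‖s‖ * ‖f u‖ ≤ (M / r) * 1 :=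
            mul_le_mul hsle (hf1 u hup) (norm_nonneg _) (by positivity)
        _ = M / r := mul_one _
    rcases eq_or_lt_of_le hp0 with hp0' | hppos
    · -- p = 0 : f ξ = 0
      have hzero : ‖f ξ‖ ≤ 0 := by
        by_contra hpos
        push_neg at hpos
        set r : ℝ := max 1 (2 * M / ‖f ξ‖) with hr
        have hr1 : 1 ≤ r := le_max_left _ _
        have hr0 : 0 < r := lt_of_lt_of_le one_pos hr1
        have := scale r hr1 (by rw [← hp0', mul_zero]; exact hδ)
        have hrge : 2 * M / ‖f ξ‖ ≤ r := le_max_right _ _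
        have h2 : M / r ≤ M / (2 * M / ‖f ξ‖) :=
          div_le_div_of_nonneg_left hM0.le (by positivity) hrge
        have h3 : M / (2 * M / ‖f ξ‖) = ‖f ξ‖ / 2 := by
          field_simp
        have : ‖f ξ‖ ≤ ‖f ξ‖ / 2 := this.trans (h2.trans_eq h3)
        linarith
      calc ‖f ξ‖ ≤ 0 := hzero
        _ ≤ C * p := by positivity
    · rcases le_or_gt (2 * p) δ with hsmall | hlarge
      · -- small p : one-shot scaling
        have hr1 : 1 ≤ δ / (2 * p) := (one_le_div (by positivity)).mpr hsmall
        have := scale (δ / (2 * p)) hr1 (by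
          have : δ / (2 * p) * p = δ / 2 := by field_simp
          rw [this]; linarith)
        refine this.trans ?_
        have h1 : M / (δ / (2 * p)) = 2 * M * p / δ := by field_simp
        rw [h1, hCdef, div_mul_eq_mul_div, div_le_div_iff₀ hδ hδ]
        nlinarith [mul_pos (mul_pos hM0 hppos) hδ]
      · -- large p : chain of additions
        set N : ℕ := ⌈2 * p / δ⌉₊ with hN
        have hqpos : (0:ℝ) < 2 * p / δ := by positivity
        have hq1 : (1:ℝ) < 2 * p / δ := (one_lt_div hδ).mpr hlarge
        have hN1 : 1 ≤ N := Nat.one_le_iff_ne_zero.mpr (by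
          simp only [hN, ne_eq, Nat.ceil_eq_zero, not_le]
          exact hqpos)
        have hN0 : (0:ℝ) < (N:ℝ) := by exact_mod_cast hN1
        have hNge : 2 * p / δ ≤ (N:ℝ) := Nat.le_ceil _
        have hNle : (N:ℝ) ≤ 4 * p / δ := by
          have := Nat.ceil_lt_add_one hqpos.le (R := ℝ)
          have h4 : 2 * p / δ + 1 ≤ 4 * p / δ := by
            have : (1:ℝ) ≤ 2 * p / δ := hq1.le
            have heq4 : (4:ℝ) * p / δ = 2 * p / δ + 2 * p / δ := by ring
            linarith
          exact le_of_lt (lt_of_lt_of_le (by exact_mod_cast this) h4)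
        set u : CInfOn n Ω := ((((N:ℝ))⁻¹ : ℝ) : ℂ) • ξ with hu
        have hup : pnorm Ω L k u.val < δ := by
          have huval : (u : Rn n → ℂ) = ((((N:ℝ))⁻¹ : ℝ) : ℂ) • (ξ : Rn n → ℂ) := rfl
          rw [huval]
          refine lt_of_le_of_lt (pnorm_smul_le hΩ ξ.2.1 hLc hLΩ k _) ?_
          rw [Complex.norm_real, Real.norm_eq_abs, abs_of_pos (by positivity)]
          have hinv : ((N:ℝ))⁻¹ ≤ δ / (2 * p) := by
            have h1 : ((N:ℝ))⁻¹ ≤ (2 * p / δ)⁻¹ := by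
              apply inv_anti₀ hqpos hNge
            rwa [inv_div] at h1
          have h2 : ((N:ℝ))⁻¹ * p ≤ δ / (2 * p) * p :=
            mul_le_mul_of_nonneg_right hinv hp0
          have h3 : δ / (2 * p) * p = δ / 2 := by field_simp
          rw [h3] at h2
          linarith
        have huV : u ∈ V := hVmem u hup
        have hfu : ‖f u‖ ≤ 1 := hf1 u hup
        have step : ∀ j : ℕ, ‖f ((j : ℂ) • u)‖ ≤ j * M := by
          intro j
          induction j with
          | zero => simp [hf.1]
          | succ j ih =>
            obtain ⟨s, hs, heq⟩ := hf.2 ((j : ℂ) • u) u huV 1 (by simp)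
            have hobj : ((j : ℂ)) • u + (1 : ℂ) • u = ((j + 1 : ℕ) : ℂ) • u := by
              rw [← add_smul]
              norm_num
            rw [← hobj]
            rw [heq, ]
            have hsM : ‖s‖ ≤ M := by
              refine hs.trans (le_of_eq ?_)
              simp [Complex.norm_real, Real.norm_eq_abs, abs_of_pos hM0]
            calc ‖f ((j:ℂ) • u) + s * f u‖ ≤ ‖f ((j:ℂ) • u)‖ + ‖s‖ * ‖f u‖ := by
                  refine (norm_add_le _ _).trans ?_
                  rw [norm_mul]
              _ ≤ j * M + M * 1 := by
                  refine add_le_add ih (mul_le_mul hsM hfu (norm_nonneg _) hM0.le)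
              _ = (j + 1 : ℕ) * M := by push_cast; ring
        have hNu : ((N : ℂ)) • u = ξ := by
          rw [hu, smul_smul]
          have : ((N : ℂ)) * ((((N:ℝ))⁻¹ : ℝ) : ℂ) = 1 := by
            push_cast
            rw [mul_inv_cancel₀ (by exact_mod_cast hN0.ne')]
          rw [this, one_smul]
        have := step N
        rw [hNu] at this
        refine this.trans ?_
        calc (N:ℝ) * M ≤ (4 * p / δ) * M := by
              exact mul_le_mul_of_nonneg_right hNle hM0.le
          _ = C * p := by rw [hCdef]; ring
  -- support of f is contained in L
  have hsupp_sub : fsupp Ω Subtype.val f ⊆ L := by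
    intro x hxmem
    by_contra hxL
    obtain ⟨hxΩ, hprop⟩ := hxmem
    obtain ⟨ξ, hξsupp, hξne⟩ := hprop (Ω \ L) (hΩ.sdiff hLc.isClosed) diff_subset ⟨hxΩ, hxL⟩
    have hpz : pnorm Ω L k ξ.val = 0 := by
      refine le_antisymm ?_ (pnorm_nonneg L k ξ.val)
      refine Finset.sum_nonpos fun i _ => ?_
      refine biSup_le'' le_rfl fun y hy => ?_
      have hyns : y ∉ suppFun Ω ξ.val := fun hmem => (hξsupp hmem).2 hy
      rw [iter_vanish hΩ ξ (hLΩ hy) hyns i, norm_zero]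
    have := key ξ
    rw [hpz, mul_zero] at this
    exact hξne (norm_le_zero_iff.mp this)
  -- support of f is compact
  have hclosed : IsClosed (fsupp Ω Subtype.val f) := by
    refine isClosed_of_closure_subset fun z hz => ?_
    have hzL : z ∈ L := (closure_minimal hsupp_sub hLc.isClosed) hz
    refine ⟨hLΩ hzL, fun G hG hGΩ hzG => ?_⟩
    obtain ⟨x, hxG, hxf⟩ := mem_closure_iff.mp hz G hG hzG
    exact hxf.2 G hG hGΩ hxG
  have hcompact : IsCompact (fsupp Ω Subtype.val f) :=
    hLc.of_isClosed_subset hclosed hsupp_sub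
  refine ⟨L, hLc, hLΩ, C, hC, k, key, hcompact, fun K hK hKΩ => ⟨C, hC, fun ξ hsupp => ?_⟩⟩
  refine (key ξ).trans (mul_le_mul_of_nonneg_left ?_ hC.le)
  refine Finset.sum_le_sum fun i _ => ?_
  refine biSup_le'' (biSup_nonneg' fun _ => norm_nonneg _) fun y hyL => ?_
  by_cases hy : y ∈ suppFun Ω ξ.val
  · exact le_biSup'' (bdd_iter hΩ ξ.2.1 hK hKΩ i) (hsupp hy)
  · rw [iter_vanish hΩ ξ (hLΩ hyL) hy i, norm_zero]
    exact biSup_nonneg' fun _ => norm_nonneg _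
end

section
/- Let g: ℂ → ℂ satisfy g(0) = 0 and suppose g is complex-differentiable at some z₀ ∈ ℂ with g′(z₀) ≠ 0. Let ε > 0. Then g ∈ 𝓚_{M,ε}(ℂ,ℂ) for some M ≥ 1 if and only if: (1) g is continuous; (2) g(z) ≠ 0 whenever 0 < |z| ≤ ε; (3) inf{|g(u)/u| : 0 < |u| ≤ ε} > 0; (4) sup{|(g(z+u)−g(z))/u| : z ∈ ℂ, 0 < |u| ≤ ε} < +∞. -/
open Topology Filter Set

/-- The family `𝓚_{M,ε}(ℂ, ℂ)`. -/
def DemiKC (M ε : ℝ) (g : ℂ → ℂ) : Prop :=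
  g 0 = 0 ∧ ∀ z u t : ℂ, ‖u‖ ≤ ε → ‖t‖ ≤ 1 →
    ∃ s : ℂ, ‖s‖ ≤ M * ‖t‖ ∧ g (z + t * u) = g z + s * g u

/-- characterization of the demi-linear functions `g ∈ 𝓚_{M,ε}(ℂ, ℂ)` among
functions with `g 0 = 0` differentiable at some point with nonzero derivative. -/
theorem stmt18 (g : ℂ → ℂ) (hg0 : g 0 = 0)
    (z₀ d : ℂ) (hd : HasDerivAt g d z₀) (hd0 : d ≠ 0)
    (ε : ℝ) (hε : 0 < ε) :
    (∃ M : ℝ, 1 ≤ M ∧ DemiKC M ε g) ↔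
      (Continuous g ∧
       (∀ z : ℂ, 0 < ‖z‖ → ‖z‖ ≤ ε → g z ≠ 0) ∧
       0 < sInf ((fun u : ℂ => ‖g u / u‖) '' {u : ℂ | 0 < ‖u‖ ∧ ‖u‖ ≤ ε}) ∧
       BddAbove ((fun p : ℂ × ℂ => ‖(g (p.1 + p.2) - g p.1) / p.2‖) ''
         {p : ℂ × ℂ | 0 < ‖p.2‖ ∧ ‖p.2‖ ≤ ε})) := by
  have hεC : ‖(ε:ℂ)‖ = ε := by simp [Complex.norm_real, abs_of_pos hε]
  have hεne : (ε:ℂ) ≠ 0 := by exact_mod_cast hε.ne'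
  constructor
  · rintro ⟨M, hM1, -, hK⟩
    have hM0 : (0:ℝ) < M := lt_of_lt_of_le one_pos hM1
    -- bound on the circle of radius ε
    have Acirc : ∀ u : ℂ, ‖u‖ = ε → ‖g u‖ ≤ M * ‖g (ε:ℂ)‖ := by
      intro u hu
      obtain ⟨s, hs, heq⟩ := hK 0 (ε:ℂ) (u / (ε:ℂ)) (le_of_eq hεC)
        (by rw [norm_div, hεC, hu]; exact le_of_eq (div_self hε.ne'))
      rw [div_mul_cancel₀ _ hεne, zero_add, hg0, zero_add] at heq
      rw [heq, norm_mul]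
      have hn1 : ‖u / (ε:ℂ)‖ = 1 := by rw [norm_div, hεC, hu, div_self hε.ne']
      have hs1 : ‖s‖ ≤ M := by rwa [hn1, mul_one] at hs
      exact mul_le_mul_of_nonneg_right hs1 (norm_nonneg _)
    set A : ℝ := M * M * ‖g (ε:ℂ)‖ / ε with hA
    -- Lipschitz-type bound for increments of size ≤ ε
    have keyB : ∀ z h : ℂ, ‖h‖ ≤ ε → ‖g (z + h) - g z‖ ≤ A * ‖h‖ := by
      intro z h hh
      rcases eq_or_ne h 0 with rfl | hh0
      · simp
      have hnpos : 0 < ‖h‖ := norm_pos_iff.mpr hh0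
      set u : ℂ := ((ε / ‖h‖ : ℝ) : ℂ) * h with hu
      have hunorm : ‖u‖ = ε := by
        rw [hu, norm_mul, Complex.norm_real, Real.norm_eq_abs,
          abs_of_pos (div_pos hε hnpos), div_mul_cancel₀ _ hnpos.ne']
      set t : ℂ := ((‖h‖ / ε : ℝ) : ℂ) with htdef
      have htnorm : ‖t‖ = ‖h‖ / ε := by
        rw [htdef, Complex.norm_real, Real.norm_eq_abs, abs_of_pos (div_pos hnpos hε)]
      have ht1 : ‖t‖ ≤ 1 := by rw [htnorm]; exact (div_le_one hε).mpr hh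
      have htu : t * u = h := by
        rw [htdef, hu, ← mul_assoc, ← Complex.ofReal_mul,
          div_mul_div_comm, mul_comm (‖h‖) ε, div_self (by positivity), Complex.ofReal_one,
          one_mul]
      obtain ⟨s, hs, heq⟩ := hK z u t (le_of_eq hunorm) ht1
      rw [htu] at heq
      rw [heq, add_sub_cancel_left, norm_mul]
      have h1 : ‖g u‖ ≤ M * ‖g (ε:ℂ)‖ := Acirc u hunorm
      have h2 : ‖s‖ ≤ M * (‖h‖ / ε) := by rwa [htnorm] at hs
      have h3 : (0:ℝ) ≤ ‖g (ε:ℂ)‖ := norm_nonneg _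
      have h2' : ‖s‖ * ε ≤ M * ‖h‖ := by
        rw [← mul_div_assoc] at h2
        exact (le_div_iff₀ hε).mp h2
      rw [hA, div_mul_eq_mul_div, le_div_iff₀ hε]
      nlinarith [norm_nonneg s, norm_nonneg (g u), norm_nonneg h,
        mul_le_mul h2' h1 (norm_nonneg _) (by positivity)]
    have hA0 : 0 ≤ A := by positivity
    -- lower bound for |g u|/|u|
    have keyLow : ∀ u : ℂ, 0 < ‖u‖ → ‖u‖ ≤ ε → ‖d‖ ≤ M * (‖g u‖ / ‖u‖) := by
      intro u hupos hu
      have hu0 : u ≠ 0 := norm_pos_iff.mp hupos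
      have hslope := hasDerivAt_iff_tendsto_slope.mp hd
      have hmap : Tendsto (fun t : ℂ => z₀ + t * u) (𝓝[≠] (0:ℂ)) (𝓝[≠] z₀) := by
        rw [tendsto_nhdsWithin_iff]
        constructor
        · have h1 : Tendsto (fun t : ℂ => t * u) (𝓝 (0:ℂ)) (𝓝 0) := by
            simpa using (tendsto_id : Tendsto id (𝓝 (0:ℂ)) (𝓝 0)).mul_const u
          have hc : Tendsto (fun t : ℂ => z₀ + t * u) (𝓝 0) (𝓝 z₀) := by
            simpa using h1.const_add z₀
          exact hc.mono_left nhdsWithin_le_nhds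
        · filter_upwards [self_mem_nhdsWithin] with t ht
          simp only [mem_compl_iff, mem_singleton_iff] at ht ⊢
          intro hcon
          have htu0 : t * u = 0 := add_eq_left.mp hcon
          exact ht ((mul_eq_zero.mp htu0).resolve_right hu0)
      have htend := (hslope.comp hmap).norm
      have hev : ∀ᶠ t : ℂ in 𝓝[≠] (0:ℂ),
          ‖slope g z₀ (z₀ + t * u)‖ ≤ M * (‖g u‖ / ‖u‖) := by
        have h1 : ∀ᶠ t : ℂ in 𝓝 (0:ℂ), ‖t‖ ≤ 1 := by
          filter_upwards [Metric.ball_mem_nhds (0:ℂ) one_pos] with t ht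
          rw [Metric.mem_ball, dist_zero_right] at ht
          exact ht.le
        filter_upwards [h1.filter_mono nhdsWithin_le_nhds, self_mem_nhdsWithin]
          with t ht1 ht0
        simp only [mem_compl_iff, mem_singleton_iff] at ht0
        have htpos : 0 < ‖t‖ := norm_pos_iff.mpr ht0
        obtain ⟨s, hs, heq⟩ := hK z₀ u t hu ht1
        rw [slope_def_field, heq, add_sub_cancel_left,
          show z₀ + t * u - z₀ = t * u by ring, norm_div, norm_mul, norm_mul]
        rw [← mul_div_assoc, div_le_div_iff₀ (by positivity) hupos]
        nlinarith [norm_nonneg (g u), norm_nonneg u,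
          mul_le_mul_of_nonneg_right hs (mul_nonneg (norm_nonneg (g u)) (norm_nonneg u))]
      exact le_of_tendsto htend hev
    have hnz : ∀ z : ℂ, 0 < ‖z‖ → ‖z‖ ≤ ε → g z ≠ 0 := by
      intro z hz1 hz2 hcon
      have := keyLow z hz1 hz2
      rw [hcon, norm_zero, zero_div, mul_zero] at this
      exact hd0 (norm_le_zero_iff.mp this)
    refine ⟨?_, hnz, ?_, ?_⟩
    · -- continuity
      rw [continuous_iff_continuousAt]
      intro z
      rw [ContinuousAt, tendsto_iff_norm_sub_tendsto_zero]
      have hb : Tendsto (fun w : ℂ => A * ‖w - z‖) (𝓝 z) (𝓝 0) := by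
        have : Tendsto (fun w : ℂ => w - z) (𝓝 z) (𝓝 0) := by
          have h := (tendsto_id : Tendsto id (𝓝 z) (𝓝 z)).sub_const z
          simpa [sub_self] using h
        simpa using (this.norm.const_mul A)
      refine squeeze_zero' ?_ ?_ hb
      · filter_upwards with w; exact norm_nonneg _
      · filter_upwards [Metric.ball_mem_nhds z hε] with w hw
        rw [Metric.mem_ball, dist_eq_norm] at hw
        have := keyB z (w - z) hw.le
        simpa using this
    · -- positive infimum
      have hdM : 0 < ‖d‖ / M := div_pos (norm_pos_iff.mpr hd0) hM0
      refine lt_of_lt_of_le hdM (le_csInf ⟨‖g (ε:ℂ) / (ε:ℂ)‖, ⟨(ε:ℂ),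
        ⟨by rw [hεC]; exact hε, le_of_eq hεC⟩, rfl⟩⟩ ?_)
      rintro b ⟨u, ⟨hupos, hu⟩, rfl⟩
      have := keyLow u hupos hu
      simp only [norm_div]
      rw [div_le_iff₀ hM0]
      linarith [this]
    · -- bounded above
      refine ⟨A, ?_⟩
      rintro b ⟨⟨z, h⟩, ⟨hpos, hle⟩, rfl⟩
      simp only
      rw [norm_div, div_le_iff₀ hpos]
      exact keyB z h hle
  · rintro ⟨-, h2, h3, h4⟩
    obtain ⟨B, hB⟩ := h4
    set m : ℝ := sInf ((fun u : ℂ => ‖g u / u‖) '' {u : ℂ | 0 < ‖u‖ ∧ ‖u‖ ≤ ε}) with hm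
    have hm0 : 0 < m := h3
    set M : ℝ := max 1 (B / m) with hM
    have hM1 : 1 ≤ M := le_max_left _ _
    have hM0 : 0 < M := lt_of_lt_of_le one_pos hM1
    refine ⟨M, hM1, hg0, ?_⟩
    intro z u t hu ht
    by_cases hu0 : u = 0
    · exact ⟨0, by rw [norm_zero]; exact mul_nonneg hM0.le (norm_nonneg t),
        by simp [hu0, hg0]⟩
    by_cases ht0 : t = 0
    · exact ⟨0, by rw [norm_zero]; exact mul_nonneg hM0.le (norm_nonneg t),
        by simp [ht0]⟩
    have hupos : 0 < ‖u‖ := norm_pos_iff.mpr hu0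
    have htpos : 0 < ‖t‖ := norm_pos_iff.mpr ht0
    have hgu : g u ≠ 0 := h2 u hupos hu
    have hgupos : 0 < ‖g u‖ := norm_pos_iff.mpr hgu
    have hmle : m * ‖u‖ ≤ ‖g u‖ := by
      have hmem : ‖g u / u‖ ∈ ((fun u : ℂ => ‖g u / u‖) ''
          {u : ℂ | 0 < ‖u‖ ∧ ‖u‖ ≤ ε}) := ⟨u, ⟨hupos, hu⟩, rfl⟩
      have hbdd : BddBelow ((fun u : ℂ => ‖g u / u‖) '' {u : ℂ | 0 < ‖u‖ ∧ ‖u‖ ≤ ε}) :=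
        ⟨0, by rintro x ⟨y, -, rfl⟩; exact norm_nonneg _⟩
      have := csInf_le hbdd hmem
      rw [norm_div] at this
      rw [← hm] at this
      calc m * ‖u‖ ≤ (‖g u‖ / ‖u‖) * ‖u‖ :=
            mul_le_mul_of_nonneg_right this (norm_nonneg _)
        _ = ‖g u‖ := div_mul_cancel₀ _ hupos.ne' 
    have hBle : ‖g (z + t * u) - g z‖ ≤ B * (‖t‖ * ‖u‖) := by
      have hmem : ((fun p : ℂ × ℂ => ‖(g (p.1 + p.2) - g p.1) / p.2‖) (z, t * u)) ∈
          ((fun p : ℂ × ℂ => ‖(g (p.1 + p.2) - g p.1) / p.2‖) ''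
            {p : ℂ × ℂ | 0 < ‖p.2‖ ∧ ‖p.2‖ ≤ ε}) := by
        refine ⟨(z, t * u), ⟨?_, ?_⟩, rfl⟩
        · simpa [norm_mul] using mul_pos htpos hupos
        · rw [norm_mul]
          calc ‖t‖ * ‖u‖ ≤ 1 * ε := mul_le_mul ht hu (norm_nonneg _) zero_le_one
            _ = ε := one_mul _
      have := hB hmem
      simp only [norm_div, norm_mul] at this
      rw [div_le_iff₀ (by positivity : (0:ℝ) < ‖t‖ * ‖u‖)] at this
      linarith [this]
    refine ⟨(g (z + t * u) - g z) / g u, ?_, by rw [div_mul_cancel₀ _ hgu]; ring⟩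
    rw [norm_div, div_le_iff₀ hgupos]
    have hBM : B ≤ M * m := by
      have : B / m ≤ M := le_max_right _ _
      rwa [div_le_iff₀ hm0] at this
    nlinarith [mul_le_mul_of_nonneg_left hmle (mul_nonneg hM0.le htpos.le),
      mul_le_mul_of_nonneg_right hBM (mul_nonneg htpos.le hupos.le)]
end

section
/- Let Ω be a nonempty open subset of ℝⁿ, M ≥ 1, γ(t) = M·t for t ∈ ℂ, and y ∈ Ω. If f ∈ C^∞(Ω)^{[γ,V]} is of order 0 and supp f = {y}, then there exist ε > 0 and g ∈ 𝓚_{M,ε}(ℂ,ℂ) such that f(ξ) = g(ξ(y)) for all ξ ∈ C^∞(Ω). Conversely, for every ε > 0 and every g ∈ 𝓚_{M,ε}(ℂ,ℂ), the set V = {ξ ∈ C^∞(Ω) : |ξ(y)| ≤ ε} is a neighborhood of 0 in C^∞(Ω) and the functional f defined by f(ξ) = g(ξ(y)) belongs to C^∞(Ω)^{[γ,V]}, is of order 0, and (when g ≠ 0) has supp f = {y}. -/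
open Topology Filter Set

namespace Stmt19Aux

open Metric

variable {n : ℕ} {Ω : Set (Rn n)}

lemma suppFun_subset_tsupport (g : Rn n → ℂ) : suppFun Ω g ⊆ tsupport g := fun x hx =>
  (closure_mono (fun z (hz : z ∈ Ω ∧ g z ≠ 0) => hz.2 : {x | x ∈ Ω ∧ g x ≠ 0} ⊆ Function.support g)) hx.1

/-- multiplication of a smooth real function with an element of `C^∞(Ω)`. -/
def mulR (θ : Rn n → ℝ) (hθ : ContDiff ℝ (⊤:ℕ∞) θ) (ξ : CInfOn n Ω) : CInfOn n Ω :=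
  ⟨fun x => (θ x : ℂ) * ξ.val x,
   (Complex.ofRealCLM.contDiff.comp hθ).contDiffOn.mul ξ.2.1,
   fun x hx => by show (θ x : ℂ) * ξ.val x = 0; rw [ξ.2.2 x hx, mul_zero]⟩

lemma tendsto_cinf {α : Type*} {l : Filter α} {F : α → CInfOn n Ω} {ξ : CInfOn n Ω}
    (h : ∀ (k : ℕ) (K : Set (Rn n)), IsCompact K → K ⊆ Ω →
      TendstoUniformlyOn (fun a => iteratedFDerivWithin ℝ k (F a).val Ω)
        (iteratedFDerivWithin ℝ k ξ.val Ω) l K) :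
    Tendsto F l (𝓝 ξ) := by
  have hn : 𝓝 ξ = Filter.comap (fun ζ : CInfOn n Ω => derivsMap n Ω ζ.val)
      (𝓝 (derivsMap n Ω ξ.val)) := nhds_induced _ _
  rw [hn, tendsto_comap_iff]
  rw [tendsto_pi_nhds]
  intro k
  rw [UniformOnFun.tendsto_iff_tendstoUniformlyOn]
  rintro K ⟨hK, hKΩ⟩
  exact h k K hK hKΩ

lemma cont_eval (hy : y ∈ Ω) : Continuous (fun ξ : CInfOn n Ω => ξ.val y) := by
  have h1 : Continuous (fun ξ : CInfOn n Ω => derivsMap n Ω ξ.val) := continuous_induced_dom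
  have h2 : Continuous (fun p : ((k : ℕ) → UniformOnFun (Rn n)
      (ContinuousMultilinearMap ℝ (fun _ : Fin k => Rn n) ℂ) (cptsIn n Ω)) => p 0) :=
    continuous_apply 0
  have h3 : Continuous (fun q : UniformOnFun (Rn n)
      (ContinuousMultilinearMap ℝ (fun _ : Fin 0 => Rn n) ℂ) (cptsIn n Ω) =>
      (UniformOnFun.toFun (cptsIn n Ω) q) y) :=
    (UniformOnFun.uniformContinuous_eval_of_mem
      (ContinuousMultilinearMap ℝ (fun _ : Fin 0 => Rn n) ℂ) (cptsIn n Ω) (mem_singleton y)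
      (show {y} ∈ cptsIn n Ω from ⟨isCompact_singleton, singleton_subset_iff.2 hy⟩)).continuous
  have h4 : Continuous (fun m : ContinuousMultilinearMap ℝ (fun _ : Fin 0 => Rn n) ℂ =>
      m (fun i => 0)) := by
    exact (continuousMultilinearCurryFin0 ℝ (Rn n) ℂ).continuous
  have := ((h4.comp h3).comp h2).comp h1
  convert this using 2 with ξ
  rfl


end Stmt19Aux
namespace Stmt19Aux2
open Stmt19Aux Metric

variable {n : ℕ} {Ω : Set (Rn n)}

lemma tendsto_smul0 (hΩ : IsOpen Ω) (w : CInfOn n Ω) :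
    Tendsto (fun c : ℂ => c • w) (𝓝 0) (𝓝 (0 : CInfOn n Ω)) := by
  apply tendsto_cinf
  intro k K hK hKΩ
  have hu : UniqueDiffOn ℝ Ω := hΩ.uniqueDiffOn
  have hcd : ContDiffOn ℝ (k : ℕ∞) w.val Ω := w.2.1.of_le (by exact_mod_cast le_top)
  have hco : ContinuousOn (iteratedFDerivWithin ℝ k w.val Ω) Ω :=
    w.2.1.continuousOn_iteratedFDerivWithin (by exact_mod_cast le_top) hu
  obtain ⟨C, hC⟩ := hK.exists_bound_of_continuousOn (hco.mono hKΩ)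
  rw [Metric.tendstoUniformlyOn_iff]
  intro ε hε
  have hb : Metric.ball (0:ℂ) (ε / (max C 0 + 1)) ∈ 𝓝 (0:ℂ) :=
    Metric.ball_mem_nhds _ (by positivity)
  filter_upwards [hb] with c hc x hx
  have h1 : iteratedFDerivWithin ℝ k ((c • w) : CInfOn n Ω).val Ω x
      = c • iteratedFDerivWithin ℝ k w.val Ω x := by
    have hv : ((c • w) : CInfOn n Ω).val = c • w.val := rfl
    rw [hv]
    exact iteratedFDerivWithin_const_smul_apply (hcd x (hKΩ hx)) hu (hKΩ hx)
  have h0 : iteratedFDerivWithin ℝ k ((0 : CInfOn n Ω)).val Ω x = 0 := by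
    have hv : ((0 : CInfOn n Ω)).val = (fun _ => (0:ℂ)) := rfl
    rw [hv]; exact congrFun iteratedFDerivWithin_zero_fun x
  rw [h0, h1, dist_eq_norm, zero_sub, norm_neg, norm_smul]
  have hcn : ‖c‖ < ε / (max C 0 + 1) := by simpa using hc
  have hDC : ‖iteratedFDerivWithin ℝ k w.val Ω x‖ ≤ max C 0 + 1 := by
    have := hC x hx; have := le_max_left C 0; linarith
  calc ‖c‖ * ‖iteratedFDerivWithin ℝ k w.val Ω x‖
      ≤ ‖c‖ * (max C 0 + 1) := by
        exact mul_le_mul_of_nonneg_left hDC (norm_nonneg _)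
    _ < (ε / (max C 0 + 1)) * (max C 0 + 1) := by
        apply mul_lt_mul_of_pos_right hcn; positivity
    _ = ε := by field_simp

lemma absorb (hΩ : IsOpen Ω) {V : Set (CInfOn n Ω)} (hV : V ∈ 𝓝 (0 : CInfOn n Ω))
    (w : CInfOn n Ω) : ∃ N : ℕ, 0 < N ∧ ((N : ℂ))⁻¹ • w ∈ V := by
  have h : (fun c : ℂ => c • w) ⁻¹' V ∈ 𝓝 (0:ℂ) := by
    have ht := tendsto_smul0 hΩ w
    rw [Filter.tendsto_def] at ht
    exact ht V hV
  obtain ⟨r, hr, hball⟩ := Metric.mem_nhds_iff.1 h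
  obtain ⟨N, hN⟩ := exists_nat_gt (1/r)
  have hNpos : 0 < N := by
    have h1r : (0:ℝ) < 1/r := by positivity
    have : (0:ℝ) < N := lt_trans h1r hN
    exact_mod_cast this
  refine ⟨N, hNpos, hball ?_⟩
  have hNR : (0:ℝ) < N := Nat.cast_pos.2 hNpos
  have : ‖((N:ℂ))⁻¹‖ = (N:ℝ)⁻¹ := by
    rw [norm_inv]; norm_num
  simp only [mem_ball, dist_zero_right]
  rw [this]
  have h2 : (1:ℝ)/N < 1/(1/r) := one_div_lt_one_div_of_lt (by positivity) hN
  rw [one_div_one_div] at h2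
  rw [inv_eq_one_div]; exact h2

lemma add_estimate {M : ℝ} (hM : 1 ≤ M) {V : Set (CInfOn n Ω)} {f : CInfOn n Ω → ℂ}
    (hf : DemiK (fun t : ℂ => (M:ℂ) * t) V f) (ξ w : CInfOn n Ω) {N : ℕ} (hN : 0 < N)
    (hw : ((N : ℂ))⁻¹ • w ∈ V) :
    ‖f (ξ + w) - f ξ‖ ≤ N * (M * ‖f (((N:ℂ))⁻¹ • w)‖) := by
  set u : CInfOn n Ω := ((N:ℂ))⁻¹ • w with hu
  have key : ∀ k : ℕ, ‖f (ξ + (k:ℂ) • u) - f ξ‖ ≤ k * (M * ‖f u‖) := by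
    intro k; induction k with
    | zero => simp
    | succ k ih =>
      obtain ⟨s, hs, heq⟩ := hf.2 (ξ + (k:ℂ) • u) u hw 1 (by norm_num)
      have h2 : ξ + ((k+1:ℕ):ℂ) • u = (ξ + (k:ℂ) • u) + (1:ℂ) • u := by
        push_cast; rw [add_smul, one_smul]; abel
      have hsn : ‖s‖ ≤ M := by
        have hs' : ‖s‖ ≤ ‖(M:ℂ) * 1‖ := hs
        rw [mul_one, Complex.norm_real] at hs'
        simpa [abs_of_pos (lt_of_lt_of_le one_pos hM)] using hs'
      rw [h2, heq]
      have hstep : ‖s * f u‖ ≤ M * ‖f u‖ := by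
        rw [norm_mul]; exact mul_le_mul_of_nonneg_right hsn (norm_nonneg _)
      calc ‖f (ξ + (k:ℂ) • u) + s * f u - f ξ‖
          = ‖(f (ξ + (k:ℂ) • u) - f ξ) + s * f u‖ := by rw [add_sub_right_comm]
        _ ≤ ‖f (ξ + (k:ℂ) • u) - f ξ‖ + ‖s * f u‖ := norm_add_le _ _
        _ ≤ k * (M * ‖f u‖) + M * ‖f u‖ := add_le_add ih hstep
        _ = ((k+1:ℕ):ℝ) * (M * ‖f u‖) := by push_cast; ring
  have h := key N
  have hNu : (N:ℂ) • u = w := by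
    rw [hu, smul_smul, mul_inv_cancel₀ (Nat.cast_ne_zero.2 hN.ne'), one_smul]
  rwa [hNu] at h

lemma add_null (hΩ : IsOpen Ω) {M : ℝ} (hM : 1 ≤ M) {V : Set (CInfOn n Ω)}
    (hV : V ∈ 𝓝 (0 : CInfOn n Ω)) {f : CInfOn n Ω → ℂ}
    (hf : DemiK (fun t : ℂ => (M:ℂ) * t) V f) (ξ w : CInfOn n Ω)
    (hnull : ∀ c : ℂ, f (c • w) = 0) : f (ξ + w) = f ξ := by
  obtain ⟨N, hN, hw⟩ := absorb hΩ hV w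
  have h := add_estimate hM hf ξ w hN hw
  rw [hnull _] at h
  simp only [norm_zero, mul_zero] at h
  exact sub_eq_zero.1 (norm_le_zero_iff.1 h)

end Stmt19Aux2
namespace Stmt19Aux3
open Metric

lemma demiKC_onestep {M ε : ℝ} (hε : 0 < ε) {g : ℂ → ℂ} (hg : DemiKC M ε g)
    (z w : ℂ) (hw : ‖w‖ ≤ ε) : ‖g (z + w) - g z‖ ≤ (M * ‖g (ε:ℂ)‖ / ε) * ‖w‖ := by
  have hεC : ((ε:ℂ)) ≠ 0 := by exact_mod_cast hε.ne'
  have htn : ‖w / (ε:ℂ)‖ = ‖w‖ / ε := by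
    rw [norm_div, Complex.norm_real, Real.norm_eq_abs, abs_of_pos hε]
  obtain ⟨s, hs, heq⟩ := hg.2 z (ε:ℂ) (w / (ε:ℂ))
    (by rw [Complex.norm_real, Real.norm_eq_abs, abs_of_pos hε])
    (by rw [htn]; exact div_le_one_of_le₀ hw hε.le)
  rw [div_mul_cancel₀ w hεC] at heq
  rw [heq, add_sub_cancel_left, norm_mul]
  rw [htn] at hs
  calc ‖s‖ * ‖g (ε:ℂ)‖ ≤ (M * (‖w‖ / ε)) * ‖g (ε:ℂ)‖ :=
        mul_le_mul_of_nonneg_right hs (norm_nonneg _)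
    _ = (M * ‖g (ε:ℂ)‖ / ε) * ‖w‖ := by ring

lemma demiKC_global {M ε : ℝ} (hε : 0 < ε) {g : ℂ → ℂ} (hg : DemiKC M ε g) (hM : 0 ≤ M)
    (z w : ℂ) : ‖g (z + w) - g z‖ ≤ (M * ‖g (ε:ℂ)‖ / ε) * ‖w‖ := by
  set L : ℝ := M * ‖g (ε:ℂ)‖ / ε with hL
  have hL0 : 0 ≤ L := by positivity
  have key : ∀ N : ℕ, ∀ z w : ℂ, ‖w‖ ≤ N * ε → ‖g (z + w) - g z‖ ≤ L * ‖w‖ := by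
    intro N; induction N with
    | zero =>
      intro z w hw
      have hw0 : w = 0 := norm_le_zero_iff.1 (by simpa using hw)
      simp [hw0]
    | succ N ih =>
      intro z w hw
      by_cases hsmall : ‖w‖ ≤ ε
      · exact demiKC_onestep hε hg z w hsmall
      · push_neg at hsmall
        have hwpos : 0 < ‖w‖ := lt_trans hε hsmall
        set r : ℂ := (↑(ε / ‖w‖) : ℂ) * w with hr
        have hrn : ‖r‖ = ε := by
          rw [hr, norm_mul, Complex.norm_real, Real.norm_eq_abs,
            abs_of_pos (by positivity : (0:ℝ) < ε / ‖w‖)]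
          rw [div_mul_cancel₀ _ hwpos.ne']
        have hwr : w - r = (↑(1 - ε / ‖w‖) : ℂ) * w := by
          rw [hr, Complex.ofReal_sub, Complex.ofReal_one, Complex.ofReal_div]; ring
        have hw'n : ‖w - r‖ = ‖w‖ - ε := by
          rw [hwr, norm_mul, Complex.norm_real, Real.norm_eq_abs,
            abs_of_nonneg (by rw [sub_nonneg]; exact div_le_one_of_le₀ hsmall.le hwpos.le)]
          rw [sub_mul, one_mul, div_mul_cancel₀ _ hwpos.ne']
        have h1 : ‖g (z + (w - r)) - g z‖ ≤ L * (‖w‖ - ε) := by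
          have := ih z (w - r) (by rw [hw'n]; push_cast at hw ⊢; linarith)
          rwa [hw'n] at this
        have h2 : ‖g ((z + (w - r)) + r) - g (z + (w - r))‖ ≤ L * ε := by
          have := demiKC_onestep hε hg (z + (w - r)) r (le_of_eq hrn)
          rwa [hrn] at this
        have hzw : z + w = (z + (w - r)) + r := by ring
        calc ‖g (z + w) - g z‖
            = ‖(g ((z + (w - r)) + r) - g (z + (w - r))) + (g (z + (w - r)) - g z)‖ := by
              rw [sub_add_sub_cancel, hzw]
          _ ≤ ‖g ((z + (w - r)) + r) - g (z + (w - r))‖ + ‖g (z + (w - r)) - g z‖ :=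
              norm_add_le _ _
          _ ≤ L * ε + L * (‖w‖ - ε) := add_le_add h2 h1
          _ = L * ‖w‖ := by ring
  obtain ⟨N, hN⟩ := exists_nat_ge (‖w‖ / ε)
  exact key N z w (by rw [← div_le_iff₀ hε]; exact hN)

lemma lipschitz_continuous {g : ℂ → ℂ} {L : ℝ}
    (h : ∀ z w : ℂ, ‖g (z + w) - g z‖ ≤ L * ‖w‖) : Continuous g := by
  have hL0 : 0 ≤ L := by
    by_contra hc
    push_neg at hc
    have h1 := h 0 1
    have : (0:ℝ) ≤ ‖g (0 + 1) - g 0‖ := norm_nonneg _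
    simp only [norm_one, mul_one] at h1
    linarith
  have hlip : LipschitzWith (Real.toNNReal L) g := by
    apply LipschitzWith.of_dist_le_mul
    intro x y
    have hx := h y (x - y)
    rw [add_sub_cancel] at hx
    rw [dist_eq_norm, dist_eq_norm, Real.coe_toNNReal L hL0]
    exact hx
  exact hlip.continuous

end Stmt19Aux3
namespace Stmt19Aux4
open Stmt19Aux Metric Manifold

variable {n : ℕ} {Ω : Set (Rn n)}

lemma cutoff {K U : Set (Rn n)} (hK : IsCompact K) (hU : IsOpen U) (hKU : K ⊆ U) :
    ∃ θ : Rn n → ℝ, ContDiff ℝ (⊤:ℕ∞) θ ∧ (∀ x, θ x ∈ Icc (0:ℝ) 1) ∧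
      (∀ x ∈ K, θ x = 1) ∧ IsCompact (tsupport θ) ∧ tsupport θ ⊆ U := by
  obtain ⟨L, hL, hKL, hLU⟩ := exists_compact_between hK hU hKU
  obtain ⟨θ, hθ0, hθ1, hθI⟩ := exists_contMDiffMap_zero_one_of_isClosed 𝓘(ℝ, Rn n) (n := ⊤)
    (isClosed_compl_iff.2 isOpen_interior : IsClosed (interior L)ᶜ) hK.isClosed
    (disjoint_compl_left_iff.2 hKL)
  have hsupp : tsupport (θ : Rn n → ℝ) ⊆ L := by
    apply (closure_minimal ?_ hL.isClosed)
    intro x hx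
    by_contra hxL
    exact hx (hθ0 (fun hmem => hxL (interior_subset hmem)))
  refine ⟨θ, ?_, hθI, fun x hx => hθ1 hx, hL.of_isClosed_subset (isClosed_tsupport _) hsupp,
    hsupp.trans hLU⟩
  exact θ.contMDiff.contDiff

end Stmt19Aux4
namespace Stmt19Aux5
open Stmt19Aux Stmt19Aux2 Stmt19Aux4 Metric

variable {n : ℕ} {Ω : Set (Rn n)}

lemma vanish (hΩ : IsOpen Ω) {y : Rn n} {M : ℝ} (hM : 1 ≤ M)
    {V : Set (CInfOn n Ω)} (hV : V ∈ 𝓝 (0:CInfOn n Ω)) {f : CInfOn n Ω → ℂ}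
    (hf : DemiK (fun t : ℂ => (M:ℂ) * t) V f) (hfc : Continuous f)
    (hsupp : fsupp Ω Subtype.val f = {y})
    {U : Set (Rn n)} (hUo : IsOpen U) (hyUm : y ∈ U)
    (ζ : CInfOn n Ω) (hζU : ∀ x ∈ U, ζ.val x = 0) : f ζ = 0 := by
  classical
  -- good neighborhoods around points other than y
  have good : ∀ x ∈ Ω, x ≠ y → ∃ G : Set (Rn n), IsOpen G ∧ G ⊆ Ω ∧ x ∈ G ∧
      ∀ ξ : CInfOn n Ω, suppFun Ω ξ.val ⊆ G → f ξ = 0 := by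
    intro x hxΩ hxy
    have hx : x ∉ fsupp Ω Subtype.val f := by
      rw [hsupp]; simpa using hxy
    rw [fsupp] at hx
    simp only [mem_setOf_eq] at hx
    push_neg at hx
    obtain ⟨G, hGo, hGΩ, hxG, hG⟩ := hx hxΩ
    exact ⟨G, hGo, hGΩ, hxG, fun ξ hξ => hG ξ hξ⟩
  -- STEP 1: the compactly supported case
  have compact_case : ∀ ζ' : CInfOn n Ω, IsCompact (tsupport ζ'.val) →
      tsupport ζ'.val ⊆ Ω → (∀ x ∈ U, ζ'.val x = 0) → f ζ' = 0 := by
    intro ζ' hcpt hsub hval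
    have hyn : tsupport ζ'.val ⊆ Uᶜ := by
      apply closure_minimal ?_ hUo.isClosed_compl
      intro x hx hxU
      exact hx (hval x hxU)
    have key : ∀ x : Rn n, ∃ (r : ℝ) (G : Set (Rn n)), 0 < r ∧
        (x ∈ tsupport ζ'.val → (IsOpen G ∧ closedBall x r ⊆ G ∧
          ∀ ξ : CInfOn n Ω, suppFun Ω ξ.val ⊆ G → f ξ = 0)) := by
      intro x
      by_cases hx : x ∈ tsupport ζ'.val
      · have hxΩ := hsub hx
        have hxy : x ≠ y := fun h => (hyn hx) (h ▸ hyUm)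
        obtain ⟨G, hGo, hGΩ, hxG, hG⟩ := good x hxΩ hxy
        obtain ⟨r, hr, hball⟩ := Metric.isOpen_iff.1 hGo x hxG
        exact ⟨r/2, G, by positivity,
          fun _ => ⟨hGo, (closedBall_subset_ball (by linarith)).trans hball, hG⟩⟩
      · exact ⟨1, ∅, one_pos, fun h => absurd h hx⟩
    choose rr GG hrr hGG using key
    have main : ∀ F : Finset (Rn n), (↑F : Set (Rn n)) ⊆ tsupport ζ'.val →
        ∀ ξ : CInfOn n Ω, tsupport ξ.val ⊆ (⋃ x ∈ F, ball x (rr x)) → f ξ = 0 := by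
      intro F
      induction F using Finset.induction_on with
      | empty =>
        intro _ ξ hsupp0
        simp only [Finset.notMem_empty, iUnion_of_empty, iUnion_empty] at hsupp0
        have hξ0 : ξ = 0 := by
          apply Subtype.ext; funext x
          by_contra hx
          exact hsupp0 (subset_closure hx)
        rw [hξ0]; exact hf.1
      | @insert a F ha ih =>
        intro hFsub ξ hξsub
        have haT : a ∈ tsupport ζ'.val := hFsub (by simp)
        obtain ⟨hGo, hballG, hGnull⟩ := hGG a haT
        obtain ⟨θ, hθs, hθI, hθ1, hθc, hθsup⟩ :=
          cutoff (isCompact_closedBall a (rr a)) hGo hballG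
        set w : CInfOn n Ω := mulR θ hθs ξ with hw
        have hwnull : ∀ c : ℂ, f (c • w) = 0 := by
          intro c
          apply hGnull
          intro x hx
          have hx' : x ∈ tsupport ((c • w) : CInfOn n Ω).val := suppFun_subset_tsupport _ hx
          apply hθsup
          refine closure_mono ?_ hx'
          intro z hz
          simp only [Function.mem_support] at hz ⊢
          intro hθz
          apply hz
          show c * ((θ z : ℂ) * ξ.val z) = 0
          rw [hθz]; simp
        have hsplit : ξ = (ξ - w) + w := by abel
        rw [hsplit, add_null hΩ hM hV hf (ξ - w) w hwnull]
        apply ih (fun x hx => hFsub (by simp only [Finset.coe_insert, mem_insert_iff]; exact Or.inr hx)) (ξ - w)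
        have hsub1 : Function.support ((ξ - w) : CInfOn n Ω).val ⊆
            tsupport ξ.val ∩ (closedBall a (rr a))ᶜ := by
          intro z hz
          simp only [Function.mem_support] at hz
          constructor
          · apply subset_closure
            simp only [Function.mem_support]
            intro h0
            apply hz
            show ξ.val z - (θ z : ℂ) * ξ.val z = 0
            rw [h0]; simp
          · intro hball
            apply hz
            show ξ.val z - (θ z : ℂ) * ξ.val z = 0
            rw [hθ1 z hball]; simp
        have hsub2 : tsupport ((ξ - w) : CInfOn n Ω).val ⊆
            tsupport ξ.val ∩ (ball a (rr a))ᶜ :=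
          closure_minimal (hsub1.trans (inter_subset_inter le_rfl
            (compl_subset_compl.2 ball_subset_closedBall)))
            ((isClosed_tsupport _).inter isOpen_ball.isClosed_compl)
        intro z hz
        obtain ⟨hz1, hz2⟩ := hsub2 hz
        have hzU := hξsub hz1
        rw [Finset.set_biUnion_insert] at hzU
        rcases hzU with h | h
        · exact absurd h hz2
        · exact h
    obtain ⟨T, hTsub, hTfin, hTcov⟩ := hcpt.elim_finite_subcover_image
      (fun x _ => isOpen_ball) (fun z hz => mem_biUnion hz (mem_ball_self (hrr z)))
    apply main hTfin.toFinset (by rw [Set.Finite.coe_toFinset]; exact hTsub) ζ'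
    have hEq : (⋃ x ∈ hTfin.toFinset, ball x (rr x)) = ⋃ x ∈ T, ball x (rr x) := by
      ext z; simp [Set.Finite.mem_toFinset]
    rw [hEq]; exact hTcov
  -- STEP 2: the general case via exhaustion and continuity
  have hLC : LocallyCompactSpace ↥Ω := hΩ.locallyCompactSpace
  set E := CompactExhaustion.choice ↥Ω with hE
  have himg : ∀ m : ℕ, IsCompact ((Subtype.val : ↥Ω → Rn n) '' (E m)) :=
    fun m => (E.isCompact m).image continuous_subtype_val
  have himgΩ : ∀ m : ℕ, ((Subtype.val : ↥Ω → Rn n) '' (E m)) ⊆ Ω := by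
    rintro m x ⟨z, _, rfl⟩; exact z.2
  have hcut : ∀ m : ℕ, ∃ θ : Rn n → ℝ, ContDiff ℝ (⊤:ℕ∞) θ ∧ (∀ x, θ x ∈ Icc (0:ℝ) 1) ∧
      (∀ x ∈ ((Subtype.val : ↥Ω → Rn n) '' (E (m+1))), θ x = 1) ∧
      IsCompact (tsupport θ) ∧ tsupport θ ⊆ Ω :=
    fun m => cutoff (himg (m+1)) hΩ (himgΩ (m+1))
  choose θ hθs hθI hθ1 hθc hθΩ using hcut
  set ζm : ℕ → CInfOn n Ω := fun m => mulR (θ m) (hθs m) ζ with hζm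
  have hsupm : ∀ m, tsupport (ζm m).val ⊆ tsupport (θ m) := by
    intro m
    apply closure_mono
    intro z hz
    simp only [Function.mem_support] at hz ⊢
    intro h0; apply hz
    show (θ m z : ℂ) * ζ.val z = 0
    rw [h0]; simp
  have hzero : ∀ m, f (ζm m) = 0 := by
    intro m
    apply compact_case
    · exact (hθc m).of_isClosed_subset (isClosed_tsupport _) (hsupm m)
    · exact (hsupm m).trans (hθΩ m)
    · intro x hxU
      show (θ m x : ℂ) * ζ.val x = 0
      rw [hζU x hxU]; simp
  have hlim : Tendsto ζm atTop (𝓝 ζ) := by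
    apply tendsto_cinf
    intro k K hK hKΩ
    have hKpre : IsCompact ((Subtype.val : ↥Ω → Rn n) ⁻¹' K) := by
      apply Topology.IsEmbedding.subtypeVal.isCompact_iff.2
      rw [Subtype.image_preimage_coe, inter_eq_self_of_subset_right hKΩ]
      exact hK
    obtain ⟨m₀, hm₀⟩ := E.exists_superset_of_isCompact hKpre
    rw [Metric.tendstoUniformlyOn_iff]
    intro ε hε
    filter_upwards [eventually_ge_atTop m₀] with m hm x hx
    have hxΩ : x ∈ Ω := hKΩ hx
    have hxW : x ∈ (Subtype.val : ↥Ω → Rn n) '' (interior (E (m+1))) := by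
      have h1 : (⟨x, hxΩ⟩ : ↥Ω) ∈ E m₀ := hm₀ (show x ∈ K from hx)
      exact ⟨⟨x, hxΩ⟩, E.subset_interior (Nat.lt_succ_of_le hm) h1, rfl⟩
    set W := (Subtype.val : ↥Ω → Rn n) '' interior (E (m+1)) with hWdef
    have hWopen : IsOpen W := hΩ.isOpenMap_subtype_val _ isOpen_interior
    have hWeq : ∀ z ∈ W, (ζm m).val z = ζ.val z := by
      rintro z ⟨z', hz', rfl⟩
      show (θ m z'.val : ℂ) * ζ.val z'.val = ζ.val z'.val
      rw [hθ1 m _ ⟨z', interior_subset hz', rfl⟩]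
      simp
    have heq : iteratedFDerivWithin ℝ k (ζm m).val Ω x = iteratedFDerivWithin ℝ k ζ.val Ω x := by
      apply Filter.EventuallyEq.iteratedFDerivWithin_eq
      · exact Filter.eventually_of_mem (mem_nhdsWithin_of_mem_nhds (hWopen.mem_nhds hxW)) hWeq
      · exact hWeq x hxW
    rw [← heq, dist_self]
    exact hε
  have hten : Tendsto (fun m => f (ζm m)) atTop (𝓝 (f ζ)) := (hfc.tendsto ζ).comp hlim
  rw [show (fun m => f (ζm m)) = (fun _ : ℕ => (0:ℂ)) from funext hzero] at hten
  exact tendsto_nhds_unique hten tendsto_const_nhds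

end Stmt19Aux5
open Stmt19Aux Stmt19Aux2 Stmt19Aux3 Stmt19Aux4 Stmt19Aux5 Metric in
/-- representation of the demi-distributions `f ∈ C^∞(Ω)^{[γ,V]}` (with
`γ t = M·t`, `M ≥ 1`) of order `0` with support `{y}` as `f ξ = g (ξ y)`,
`g ∈ 𝓚_{M,ε}(ℂ, ℂ)`, and the converse construction. -/
theorem stmt19 (n : ℕ) (Ω : Set (Rn n)) (hΩ : IsOpen Ω) (hne : Ω.Nonempty)
    (y : Rn n) (hy : y ∈ Ω) (M : ℝ) (hM : 1 ≤ M) :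
    (∀ V ∈ 𝓝 (0 : CInfOn n Ω), ∀ f : CInfOn n Ω → ℂ,
      DemiK (fun t : ℂ => (M : ℂ) * t) V f → Continuous f →
      (∀ K : Set (Rn n), IsCompact K → K ⊆ Ω → ∃ C > 0,
        ∀ ξ : CInfOn n Ω, suppFun Ω ξ.val ⊆ K → ‖f ξ‖ ≤ C * ⨆ x ∈ K, ‖ξ.val x‖) →
      fsupp Ω Subtype.val f = {y} →
      ∃ ε > 0, ∃ g : ℂ → ℂ, DemiKC M ε g ∧ ∀ ξ : CInfOn n Ω, f ξ = g (ξ.val y)) ∧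
    (∀ ε > 0, ∀ g : ℂ → ℂ, DemiKC M ε g →
      {ξ : CInfOn n Ω | ‖ξ.val y‖ ≤ ε} ∈ 𝓝 (0 : CInfOn n Ω) ∧
      DemiK (fun t : ℂ => (M : ℂ) * t) {ξ : CInfOn n Ω | ‖ξ.val y‖ ≤ ε}
        (fun ξ : CInfOn n Ω => g (ξ.val y)) ∧
      Continuous (fun ξ : CInfOn n Ω => g (ξ.val y)) ∧
      (∀ K : Set (Rn n), IsCompact K → K ⊆ Ω → ∃ C > 0,
        ∀ ξ : CInfOn n Ω, suppFun Ω ξ.val ⊆ K → ‖g (ξ.val y)‖ ≤ C * ⨆ x ∈ K, ‖ξ.val x‖) ∧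
      (g ≠ 0 →
        fsupp Ω Subtype.val (fun ξ : CInfOn n Ω => g (ξ.val y)) = {y})) := by
  have hM0 : (0:ℝ) < M := lt_of_lt_of_le one_pos hM
  constructor
  ·
    intro V hV f hf hfc horder hsupp
    obtain ⟨R0, hR0, hballΩ⟩ := Metric.isOpen_iff.1 hΩ y hy
    set R : ℝ := R0/2 with hRdef
    have hRpos : 0 < R := by positivity
    have hcb : closedBall y R ⊆ Ω :=
      (closedBall_subset_ball (by rw [hRdef]; linarith)).trans hballΩ
    set χb : ContDiffBump y := ⟨R/2, R, by positivity, by linarith⟩ with hχb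
    have hbIn : χb.rIn = R/2 := rfl
    have hbOut : χb.rOut = R := rfl
    have hχz : ∀ x, x ∉ Ω → χb x = 0 := by
      intro x hx
      have hxs : x ∉ Function.support χb := by
        rw [χb.support_eq, hbOut]
        intro hmem
        exact hx (hcb (ball_subset_closedBall hmem))
      simpa [Function.mem_support, not_not] using hxs
    set χ : CInfOn n Ω := ⟨fun x => (χb x : ℂ),
      (Complex.ofRealCLM.contDiff.comp χb.contDiff).contDiffOn,
      fun x hx => by show ((χb x : ℝ) : ℂ) = 0; rw [hχz x hx]; simp⟩ with hχdef
    have hpre : (fun c : ℂ => c • χ) ⁻¹' V ∈ 𝓝 (0:ℂ) := by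
      have ht := tendsto_smul0 hΩ χ
      rw [Filter.tendsto_def] at ht
      exact ht V hV
    obtain ⟨ε₀, hε₀, hball₀⟩ := Metric.mem_nhds_iff.1 hpre
    set ε : ℝ := ε₀/2 with hεdef
    have hεpos : 0 < ε := by positivity
    have hεV : ∀ u : ℂ, ‖u‖ ≤ ε → u • χ ∈ V := by
      intro u hu
      apply hball₀
      simp only [mem_ball, dist_zero_right]
      calc ‖u‖ ≤ ε := hu
        _ < ε₀ := by rw [hεdef]; linarith
    refine ⟨ε, hεpos, fun z => f (z • χ), ⟨?_, ?_⟩, ?_⟩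
    · show f ((0:ℂ) • χ) = 0
      rw [zero_smul]; exact hf.1
    · intro z u t hu ht
      obtain ⟨s, hs, heq⟩ := hf.2 (z • χ) (u • χ) (hεV u hu) t ht
      refine ⟨s, ?_, ?_⟩
      · rw [norm_mul, Complex.norm_real, Real.norm_eq_abs, abs_of_pos hM0] at hs
        exact hs
      · have hsm : (z + t * u) • χ = z • χ + t • (u • χ) := by
          rw [add_smul, smul_smul]
        show f ((z + t * u) • χ) = f (z • χ) + s * f (u • χ)
        rw [hsm, heq]
    · intro ξ
      set A : CInfOn n Ω := (ξ.val y) • χ with hA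
      set η : CInfOn n Ω := ξ - A with hηdef
      have hηy : η.val y = 0 := by
        show ξ.val y - (ξ.val y) * ((χb y : ℝ) : ℂ) = 0
        rw [χb.one_of_mem_closedBall (mem_closedBall_self (by rw [hbIn]; positivity))]
        simp
      obtain ⟨C, hC, hord⟩ := horder (closedBall y R) (isCompact_closedBall _ _) hcb
      show f ξ = f A
      have key : ∀ ε' > 0, ‖f ξ - f A‖ ≤ ε' := by
        intro ε' hε'
        set ε'' : ℝ := ε' / (M * C + 1) with hε''def
        have hε''pos : 0 < ε'' := by positivity
        have hηcont : ContinuousAt η.val y :=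
          η.2.1.continuousOn.continuousAt (hΩ.mem_nhds hy)
        rw [Metric.continuousAt_iff] at hηcont
        obtain ⟨δ₀, hδ₀, hδ⟩ := hηcont ε'' hε''pos
        set δ : ℝ := min (δ₀/2) R with hδdef
        have hδpos : 0 < δ := lt_min (by positivity) hRpos
        have hδR : δ ≤ R := min_le_right _ _
        have hδδ₀ : δ < δ₀ := lt_of_le_of_lt (min_le_left _ _) (by linarith)
        have hηsmall : ∀ x ∈ ball y δ, ‖η.val x‖ ≤ ε'' := by
          intro x hx
          have hd : dist x y < δ₀ := lt_trans (mem_ball.1 hx) hδδ₀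
          have h2 := hδ hd
          rw [hηy, dist_zero_right] at h2
          exact h2.le
        set χd : ContDiffBump y := ⟨δ/2, δ, by positivity, by linarith⟩ with hχd
        have hdIn : χd.rIn = δ/2 := rfl
        have hdOut : χd.rOut = δ := rfl
        set w : CInfOn n Ω := mulR (fun x => χd x) χd.contDiff η with hwdef
        set ρ : CInfOn n Ω := η - w with hρdef
        have hρ0 : ∀ x ∈ ball y (δ/2), ρ.val x = 0 := by
          intro x hx
          show η.val x - (χd x : ℂ) * η.val x = 0
          rw [χd.one_of_mem_closedBall
            (show x ∈ closedBall y χd.rIn by rw [hdIn]; exact ball_subset_closedBall hx)]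
          simp
        have hnull : ∀ c : ℂ, f (c • ρ) = 0 := by
          intro c
          apply vanish hΩ hM hV hf hfc hsupp
            (isOpen_ball : IsOpen (ball y (δ/2))) (mem_ball_self (by positivity))
          intro x hx
          show c * ρ.val x = 0
          rw [hρ0 x hx, mul_zero]
        have hsplit : (A + w) + ρ = ξ := by rw [hρdef, hηdef]; abel
        have h1 : f ξ = f (A + w) := by
          rw [← hsplit]
          exact add_null hΩ hM hV hf (A + w) ρ hnull
        obtain ⟨N, hN, hNV⟩ := absorb hΩ hV w
        have hest := add_estimate hM hf A w hN hNV
        have hNR : (0:ℝ) < N := Nat.cast_pos.2 hN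
        have hsuppw : suppFun Ω ((((N:ℂ))⁻¹ • w) : CInfOn n Ω).val ⊆ closedBall y R := by
          apply (suppFun_subset_tsupport _).trans
          apply closure_minimal ?_ Metric.isClosed_closedBall
          intro z hz
          simp only [Function.mem_support] at hz
          by_contra hzb
          apply hz
          show (N:ℂ)⁻¹ * ((χd z : ℂ) * η.val z) = 0
          have hz0 : χd z = 0 := by
            have hzs : z ∉ Function.support χd := by
              rw [χd.support_eq, hdOut]
              intro hmem
              exact hzb ((closedBall_subset_closedBall hδR) (ball_subset_closedBall hmem))
            simpa [Function.mem_support, not_not] using hzs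
          rw [hz0]; simp
        have hval : ∀ x ∈ closedBall y R,
            ‖((((N:ℂ))⁻¹ • w) : CInfOn n Ω).val x‖ ≤ (N:ℝ)⁻¹ * ε'' := by
          intro x _
          show ‖(N:ℂ)⁻¹ * ((χd x : ℂ) * η.val x)‖ ≤ (N:ℝ)⁻¹ * ε''
          rw [norm_mul, norm_mul, norm_inv, Complex.norm_natCast, Complex.norm_real,
            Real.norm_eq_abs]
          by_cases hxb : x ∈ ball y δ
          · have hle1 : |χd x| ≤ 1 := by
              rw [abs_of_nonneg χd.nonneg]; exact χd.le_one
            have hle2 := hηsmall x hxb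
            calc (N:ℝ)⁻¹ * (|χd x| * ‖η.val x‖) ≤ (N:ℝ)⁻¹ * (1 * ε'') := by
                  apply mul_le_mul_of_nonneg_left ?_ (by positivity)
                  exact mul_le_mul hle1 hle2 (norm_nonneg _) one_pos.le
              _ = (N:ℝ)⁻¹ * ε'' := by ring
          · have hz0 : χd x = 0 := by
              have hzs : x ∉ Function.support χd := by rw [χd.support_eq, hdOut]; exact hxb
              simpa [Function.mem_support, not_not] using hzs
            rw [hz0]
            simp
            positivity
        have hsup : (⨆ x ∈ closedBall y R, ‖((((N:ℂ))⁻¹ • w) : CInfOn n Ω).val x‖)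
            ≤ (N:ℝ)⁻¹ * ε'' := by
          apply Real.iSup_le ?_ (by positivity)
          intro x
          exact Real.iSup_le (fun hx => hval x hx) (by positivity)
        have hfw : ‖f (((N:ℂ))⁻¹ • w)‖ ≤ C * ((N:ℝ)⁻¹ * ε'') :=
          (hord _ hsuppw).trans (mul_le_mul_of_nonneg_left hsup hC.le)
        have hMC : (0:ℝ) < M * C + 1 := by positivity
        calc ‖f ξ - f A‖ = ‖f (A + w) - f A‖ := by rw [h1]
          _ ≤ N * (M * ‖f (((N:ℂ))⁻¹ • w)‖) := hest
          _ ≤ N * (M * (C * ((N:ℝ)⁻¹ * ε''))) :=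
              mul_le_mul_of_nonneg_left (mul_le_mul_of_nonneg_left hfw hM0.le) hNR.le
          _ = M * C * ε'' := by field_simp
          _ = ε' * ((M * C) / (M * C + 1)) := by rw [hε''def]; ring
          _ ≤ ε' * 1 := by
              apply mul_le_mul_of_nonneg_left ?_ hε'.le
              rw [div_le_one hMC]; linarith
          _ = ε' := mul_one _
      by_contra hne
      have hpos : 0 < ‖f ξ - f A‖ := by
        rw [norm_pos_iff, sub_ne_zero]
        exact hne
      have := key (‖f ξ - f A‖ / 2) (by positivity)
      linarith

  · intro ε hε g hg
    have hev : Continuous (fun ξ : CInfOn n Ω => ξ.val y) := cont_eval hy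
    have h0y : ((0 : CInfOn n Ω)).val y = (0:ℂ) := rfl
    -- Lipschitz bound for g
    set L : ℝ := M * ‖g (ε:ℂ)‖ / ε with hL
    have hL0 : 0 ≤ L := div_nonneg (mul_nonneg hM0.le (norm_nonneg _)) hε.le
    have hglob : ∀ z w : ℂ, ‖g (z + w) - g z‖ ≤ L * ‖w‖ := demiKC_global hε hg hM0.le
    have hg0 : ∀ w : ℂ, ‖g w‖ ≤ L * ‖w‖ := by
      intro w
      have := hglob 0 w
      rwa [zero_add, hg.1, sub_zero] at this
    refine ⟨?_, ⟨?_, ?_⟩, ?_, ?_, ?_⟩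
    · -- neighborhood
      have hpre : (fun ξ : CInfOn n Ω => ξ.val y) ⁻¹' (Metric.closedBall 0 ε)
          ∈ 𝓝 (0 : CInfOn n Ω) := by
        apply hev.continuousAt.preimage_mem_nhds
        rw [h0y]
        exact Metric.closedBall_mem_nhds _ hε
      have hseteq : (fun ξ : CInfOn n Ω => ξ.val y) ⁻¹' (Metric.closedBall 0 ε)
          = {ξ : CInfOn n Ω | ‖ξ.val y‖ ≤ ε} := by
        ext ξ; simp [Metric.mem_closedBall, dist_zero_right]
      rwa [hseteq] at hpre
    · -- DemiK : f 0 = 0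
      show g (((0 : CInfOn n Ω)).val y) = 0
      rw [h0y, hg.1]
    · -- DemiK : main condition
      intro ξ u hu t ht
      obtain ⟨s, hs, heq⟩ := hg.2 (ξ.val y) (u.val y) t hu ht
      refine ⟨s, ?_, ?_⟩
      · rw [norm_mul, Complex.norm_real, Real.norm_eq_abs, abs_of_pos hM0]
        exact hs
      · show g (((ξ + t • u) : CInfOn n Ω).val y) = g (ξ.val y) + s * g (u.val y)
        have hval : ((ξ + t • u) : CInfOn n Ω).val y = ξ.val y + t * u.val y := rfl
        rw [hval, heq]
    · -- continuity
      exact (lipschitz_continuous hglob).comp hev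
    · -- order 0
      intro K hK hKΩ
      refine ⟨L + 1, by positivity, fun ξ hξ => ?_⟩
      have hSnn : (0:ℝ) ≤ ⨆ x ∈ K, ‖ξ.val x‖ :=
        Real.iSup_nonneg fun x => Real.iSup_nonneg fun _ => norm_nonneg _
      by_cases hyK : y ∈ K
      · obtain ⟨B, hB⟩ := hK.exists_bound_of_continuousOn (ξ.2.1.continuousOn.mono hKΩ)
        have bdd : BddAbove (range fun x => ⨆ _ : x ∈ K, ‖ξ.val x‖) := by
          refine ⟨max B 0, ?_⟩
          rintro _ ⟨x, rfl⟩
          exact Real.iSup_le (fun hx => (hB x hx).trans (le_max_left _ _)) (le_max_right _ _)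
        have inner : ‖ξ.val y‖ ≤ ⨆ _ : y ∈ K, ‖ξ.val y‖ := by
          apply le_ciSup (f := fun _ : y ∈ K => ‖ξ.val y‖) ?_ hyK
          exact ⟨‖ξ.val y‖, by rintro _ ⟨_, rfl⟩; exact le_rfl⟩
        have outer : (⨆ _ : y ∈ K, ‖ξ.val y‖) ≤ ⨆ x ∈ K, ‖ξ.val x‖ := le_ciSup bdd y
        calc ‖g (ξ.val y)‖ ≤ L * ‖ξ.val y‖ := hg0 _
          _ ≤ L * (⨆ x ∈ K, ‖ξ.val x‖) :=
              mul_le_mul_of_nonneg_left (inner.trans outer) hL0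
          _ ≤ (L + 1) * (⨆ x ∈ K, ‖ξ.val x‖) := by nlinarith
      · have hy0 : ξ.val y = 0 := by
          by_contra h0
          exact hyK (hξ ⟨subset_closure ⟨hy, h0⟩, hy⟩)
        rw [hy0, hg.1]
        simpa using mul_nonneg (by positivity : (0:ℝ) ≤ L + 1) hSnn
    · -- support equals {y}
      intro hgne
      ext x
      simp only [mem_singleton_iff]
      constructor
      · rintro ⟨hxΩ, hprop⟩
        by_contra hxy
        obtain ⟨ξ, hξsub, hξne⟩ := hprop (Ω \ {y}) (hΩ.sdiff isClosed_singleton)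
          diff_subset ⟨hxΩ, hxy⟩
        have hy0 : ξ.val y = 0 := by
          by_contra h0
          exact (hξsub ⟨subset_closure ⟨hy, h0⟩, hy⟩).2 rfl
        exact hξne (by show g (ξ.val y) = 0; rw [hy0, hg.1])
      · intro hxy
        rw [hxy]
        refine ⟨hy, fun G hGo hGΩ hyG => ?_⟩
        obtain ⟨r, hr, hballG⟩ := Metric.isOpen_iff.1 hGo y hyG
        obtain ⟨w₀, hw₀⟩ : ∃ w₀ : ℂ, g w₀ ≠ 0 := by
          by_contra hgg; push_neg at hgg
          exact hgne (funext hgg)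
        set χG : ContDiffBump y := ⟨r/4, r/2, by positivity, by linarith⟩ with hχG
        have hrIn : χG.rIn = r/4 := rfl
        have hrOut : χG.rOut = r/2 := rfl
        have hχ0 : ∀ x, x ∉ Ω → χG x = 0 := by
          intro x hx
          have : x ∉ Function.support χG := by
            rw [χG.support_eq]
            intro hmem
            exact hx (hGΩ (hballG (ball_subset_ball (by rw [hrOut]; linarith) hmem)))
          simpa [Function.mem_support, not_not] using this
        set ξ : CInfOn n Ω := ⟨fun x => w₀ * (χG x : ℂ),
          (contDiff_const.mul (Complex.ofRealCLM.contDiff.comp χG.contDiff)).contDiffOn,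
          fun x hx => by show w₀ * (χG x : ℂ) = 0; rw [hχ0 x hx]; simp⟩ with hξdef
        refine ⟨ξ, ?_, ?_⟩
        · apply (suppFun_subset_tsupport _).trans
          have hsub : tsupport ξ.val ⊆ tsupport (χG : Rn n → ℝ) := by
            apply closure_mono
            intro z hz
            simp only [Function.mem_support] at hz ⊢
            intro h0
            exact hz (by show w₀ * (χG z : ℂ) = 0; rw [h0]; simp)
          apply hsub.trans
          rw [χG.tsupport_eq]
          exact (closedBall_subset_ball (by rw [hrOut]; linarith)).trans hballG
        · show g (ξ.val y) ≠ 0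
          have : ξ.val y = w₀ := by
            show w₀ * (χG y : ℂ) = w₀
            rw [χG.one_of_mem_closedBall (mem_closedBall_self (by rw [hrIn]; positivity))]
            simp
          rw [this]
          exact hw₀
end
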